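/- arXiv:2203.13522 — 5 statements merged into one kernel-verified Lean document; each statement's English description precedes it below -/
import Mathlib

section
/- Let A and B be positive semidefinite operators on an N-dimensional complex Hilbert space, each of rank at most r, and let 0 < α < 1. Then |tr(A^α) − tr(B^α)| ≤ 5 r ‖A − B‖^α, where ‖·‖ is the operator (spectral) norm. -/
open Matrix
open scoped ComplexOrder

/-- Operator (spectral) norm of a complex matrix. -/
noncomputable def opNorm {N : ℕ} (M : Matrix (Fin N) (Fin N) ℂ) : ℝ :=
  ‖Matrix.toEuclideanCLM (𝕜 := ℂ) M‖

namespace TraceRpowAux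

open Finset
open scoped InnerProductSpace

section quad

variable {ι : Type*} [Fintype ι] [DecidableEq ι]
variable {F : Type*} [NormedAddCommGroup F] [InnerProductSpace ℂ F]

lemma repr_apply_of_eigen (e : OrthonormalBasis ι ℂ F) (T : F →L[ℂ] F) (c : ι → ℝ)
    (h : ∀ j, T (e j) = (c j : ℂ) • e j) (v : F) (i : ι) :
    e.repr (T v) i = (c i : ℂ) * e.repr v i := by
  conv_lhs => rw [← e.sum_repr v]
  simp only [map_sum, _root_.map_smul, h, smul_smul, e.repr_self]
  have : (∑ x : ι, (e.repr v x * (c x : ℂ)) • EuclideanSpace.single x (1:ℂ)) i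
      = ∑ x : ι, ((e.repr v x * (c x : ℂ)) • EuclideanSpace.single x (1:ℂ)) i :=
    by rw [WithLp.ofLp_sum]; exact Finset.sum_apply i Finset.univ _
  rw [this]
  simp [EuclideanSpace.single_apply, mul_comm]

lemma re_inner_eq_sum (e : OrthonormalBasis ι ℂ F) (T : F →L[ℂ] F) (c : ι → ℝ)
    (h : ∀ j, T (e j) = (c j : ℂ) • e j) (v : F) :
    (⟪v, T v⟫_ℂ).re = ∑ i, c i * ‖e.repr v i‖ ^ 2 := by
  rw [← e.repr.inner_map_map v (T v), PiLp.inner_apply, Complex.re_sum]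
  refine Finset.sum_congr rfl fun i _ => ?_
  rw [repr_apply_of_eigen e T c h v i]
  simp only [RCLike.inner_apply]
  rw [show (c i : ℂ) * e.repr v i * (starRingEnd ℂ) (e.repr v i)
      = (c i : ℂ) * ((starRingEnd ℂ) (e.repr v i) * e.repr v i) by ring,
    Complex.conj_mul']
  rw [← Complex.ofReal_pow, ← Complex.ofReal_mul, Complex.ofReal_re]

omit [DecidableEq ι] in
lemma norm_sq_eq_sum (e : OrthonormalBasis ι ℂ F) (v : F) :
    ‖v‖ ^ 2 = ∑ i, ‖e.repr v i‖ ^ 2 := by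
  rw [← e.repr.norm_map v, EuclideanSpace.norm_eq, Real.sq_sqrt]
  positivity

lemma repr_eq_zero_of_mem_span (e : OrthonormalBasis ι ℂ F) (s : Finset ι) {v : F}
    (hv : v ∈ Submodule.span ℂ (e '' ↑s)) {i : ι} (hi : i ∉ s) : e.repr v i = 0 := by
  induction hv using Submodule.span_induction with
  | mem x hx =>
    obtain ⟨j, hj, rfl⟩ := hx
    rw [e.repr_self, EuclideanSpace.single_apply, if_neg]
    rintro rfl; exact hi hj
  | zero => simp
  | add x y _ _ hx hy => simp [hx, hy]
  | smul a x _ hx => simp [hx]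

lemma quad_lower (e : OrthonormalBasis ι ℂ F) (T : F →L[ℂ] F) (c : ι → ℝ)
    (h : ∀ j, T (e j) = (c j : ℂ) • e j) (s : Finset ι) (t : ℝ)
    (hts : ∀ j ∈ s, t ≤ c j) {v : F} (hv : v ∈ Submodule.span ℂ (e '' ↑s)) :
    t * ‖v‖ ^ 2 ≤ (⟪v, T v⟫_ℂ).re := by
  rw [re_inner_eq_sum e T c h, norm_sq_eq_sum e v, Finset.mul_sum]
  refine Finset.sum_le_sum fun i _ => ?_
  by_cases hi : i ∈ s
  · exact mul_le_mul_of_nonneg_right (hts i hi) (by positivity)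
  · simp [repr_eq_zero_of_mem_span e s hv hi]

lemma quad_upper (e : OrthonormalBasis ι ℂ F) (T : F →L[ℂ] F) (c : ι → ℝ)
    (h : ∀ j, T (e j) = (c j : ℂ) • e j) (s : Finset ι) (t : ℝ)
    (hts : ∀ j ∈ s, c j ≤ t) {v : F} (hv : v ∈ Submodule.span ℂ (e '' ↑s)) :
    (⟪v, T v⟫_ℂ).re ≤ t * ‖v‖ ^ 2 := by
  rw [re_inner_eq_sum e T c h, norm_sq_eq_sum e v, Finset.mul_sum]
  refine Finset.sum_le_sum fun i _ => ?_
  by_cases hi : i ∈ s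
  · exact mul_le_mul_of_nonneg_right (hts i hi) (by positivity)
  · simp [repr_eq_zero_of_mem_span e s hv hi]

omit [DecidableEq ι] in
lemma finrank_span_orthonormal (e : OrthonormalBasis ι ℂ F) (s : Finset ι) :
    Module.finrank ℂ (Submodule.span ℂ (e '' ↑s)) = s.card := by
  have h1 : e '' ↑s = Set.range (fun j : s => e j) := by
    ext x; simp [Set.mem_image, Set.mem_range]
  rw [h1]
  have h2 : LinearIndependent ℂ (fun j : s => e j) :=
    e.orthonormal.linearIndependent.comp Subtype.val Subtype.val_injective
  rw [finrank_span_eq_card h2]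
  simp

lemma exists_ne_zero_mem_inf [FiniteDimensional ℂ F] (V W : Submodule ℂ F)
    (h : Module.finrank ℂ F < Module.finrank ℂ V + Module.finrank ℂ W) :
    ∃ v, v ∈ V ⊓ W ∧ v ≠ 0 := by
  apply Submodule.exists_mem_ne_zero_of_ne_bot
  intro hbot
  have h2 := Submodule.finrank_sup_add_finrank_inf_eq V W
  rw [hbot] at h2
  simp only [finrank_bot, add_zero] at h2
  have := Submodule.finrank_le (V ⊔ W)
  omega

end quad

lemma clm_eigen {N : ℕ} {A : Matrix (Fin N) (Fin N) ℂ} (hA : A.IsHermitian) (j : Fin N) :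
    toEuclideanCLM (𝕜 := ℂ) A (hA.eigenvectorBasis j) =
      (hA.eigenvalues j : ℂ) • hA.eigenvectorBasis j := by
  ext i
  have h := congrFun (hA.mulVec_eigenvectorBasis j) i
  simpa [Matrix.ofLp_toEuclideanCLM] using h

/-- Weyl's eigenvalue perturbation inequality for sorted eigenvalues. -/
lemma weyl {N : ℕ} {A B : Matrix (Fin N) (Fin N) ℂ} (hA : A.IsHermitian) (hB : B.IsHermitian)
    (i : Fin N) :
    hA.eigenvalues (Tuple.sort hA.eigenvalues i) ≤
      hB.eigenvalues (Tuple.sort hB.eigenvalues i) + opNorm (A - B) := by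
  set lam := hA.eigenvalues with hlam
  set mu := hB.eigenvalues with hmu
  set σ := Tuple.sort lam
  set τ := Tuple.sort mu
  set TA := toEuclideanCLM (𝕜 := ℂ) A
  set TB := toEuclideanCLM (𝕜 := ℂ) B
  set eA := hA.eigenvectorBasis
  set eB := hB.eigenvectorBasis
  set sA : Finset (Fin N) := (Finset.Ici i).image σ with hsA
  set sB : Finset (Fin N) := (Finset.Iic i).image τ with hsB
  have cardA : sA.card = N - i := by
    rw [hsA, Finset.card_image_of_injective _ σ.injective, Fin.card_Ici]
  have cardB : sB.card = i + 1 := by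
    rw [hsB, Finset.card_image_of_injective _ τ.injective, Fin.card_Iic]
  set V := Submodule.span ℂ (eA '' ↑sA)
  set W := Submodule.span ℂ (eB '' ↑sB)
  have hdim : Module.finrank ℂ (EuclideanSpace ℂ (Fin N)) <
      Module.finrank ℂ V + Module.finrank ℂ W := by
    rw [finrank_euclideanSpace, finrank_span_orthonormal, finrank_span_orthonormal,
      cardA, cardB, Fintype.card_fin]
    have := i.isLt
    omega
  obtain ⟨v, hv, hvne⟩ := exists_ne_zero_mem_inf V W hdim
  have hnorm : (0:ℝ) < ‖v‖ ^ 2 := by have := norm_pos_iff.mpr hvne; positivity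
  have low : lam (σ i) * ‖v‖ ^ 2 ≤ (⟪v, TA v⟫_ℂ).re := by
    refine quad_lower eA TA lam (clm_eigen hA) sA _ ?_ hv.1
    intro k hk
    rw [hsA] at hk
    obtain ⟨j, hj, rfl⟩ := Finset.mem_image.mp hk
    exact Tuple.monotone_sort lam (Finset.mem_Ici.mp hj)
  have up : (⟪v, TB v⟫_ℂ).re ≤ mu (τ i) * ‖v‖ ^ 2 := by
    refine quad_upper eB TB mu (clm_eigen hB) sB _ ?_ hv.2
    intro k hk
    rw [hsB] at hk
    obtain ⟨j, hj, rfl⟩ := Finset.mem_image.mp hk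
    exact Tuple.monotone_sort mu (Finset.mem_Iic.mp hj)
  have diff : (⟪v, TA v⟫_ℂ).re - (⟪v, TB v⟫_ℂ).re ≤ opNorm (A - B) * ‖v‖ ^ 2 := by
    have h1 : (⟪v, TA v⟫_ℂ).re - (⟪v, TB v⟫_ℂ).re = (⟪v, (TA - TB) v⟫_ℂ).re := by
      simp [inner_sub_right]
    rw [h1]
    have h2 : (⟪v, (TA - TB) v⟫_ℂ).re ≤ ‖⟪v, (TA - TB) v⟫_ℂ‖ := Complex.re_le_norm _
    refine h2.trans ((norm_inner_le_norm _ _).trans ?_)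
    have h3 : ‖(TA - TB) v‖ ≤ ‖TA - TB‖ * ‖v‖ := (TA - TB).le_opNorm v
    have h4 : TA - TB = toEuclideanCLM (𝕜 := ℂ) (A - B) := by rw [map_sub]
    calc ‖v‖ * ‖(TA - TB) v‖ ≤ ‖v‖ * (‖TA - TB‖ * ‖v‖) :=
          mul_le_mul_of_nonneg_left h3 (norm_nonneg v)
      _ = ‖TA - TB‖ * ‖v‖ ^ 2 := by ring
      _ = opNorm (A - B) * ‖v‖ ^ 2 := by rw [h4]; rfl
  have final : lam (σ i) * ‖v‖ ^ 2 ≤ (mu (τ i) + opNorm (A - B)) * ‖v‖ ^ 2 := by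
    nlinarith [low, up, diff]
  exact le_of_mul_le_mul_right (by linarith [final]) hnorm

lemma opNorm_sub_comm {N : ℕ} (A B : Matrix (Fin N) (Fin N) ℂ) :
    opNorm (B - A) = opNorm (A - B) := by
  unfold opNorm
  rw [show B - A = -(A - B) from (neg_sub A B).symm, map_neg, norm_neg]

lemma trace_cfc_re {N : ℕ} {A : Matrix (Fin N) (Fin N) ℂ} (hA : A.IsHermitian) (f : ℝ → ℝ) :
    ((hA.cfc f).trace).re = ∑ i, f (hA.eigenvalues i) := by
  have : (hA.cfc f).trace = ∑ i, (f (hA.eigenvalues i) : ℂ) := by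
    rw [Matrix.IsHermitian.cfc, Unitary.conjStarAlgAut_apply, Matrix.trace_mul_cycle,
      (Matrix.mem_unitaryGroup_iff').mp (hA.eigenvectorUnitary).2, Matrix.one_mul,
      Matrix.trace_diagonal]
    rfl
  rw [this, Complex.re_sum]
  exact Finset.sum_congr rfl fun i _ => Complex.ofReal_re _

lemma abs_rpow_sub_rpow_le' {x y ε α : ℝ} (hy : 0 ≤ y) (hyx : y ≤ x)
    (h : x - y ≤ ε) (h0 : 0 < α) (h1 : α ≤ 1) : x ^ α - y ^ α ≤ ε ^ α := by
  have hxy : 0 ≤ x - y := by linarith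
  have key : x ^ α ≤ (x - y) ^ α + y ^ α := by
    have := NNReal.rpow_add_le_add_rpow (Real.toNNReal (x - y)) (Real.toNNReal y) h0.le h1
    have hcoe : ((Real.toNNReal (x - y) + Real.toNNReal y : NNReal) : ℝ) = x := by
      rw [NNReal.coe_add, Real.coe_toNNReal _ hxy, Real.coe_toNNReal _ hy]; ring
    calc x ^ α = (((Real.toNNReal (x - y) + Real.toNNReal y : NNReal) : ℝ)) ^ α := by
          rw [hcoe]
      _ = (((Real.toNNReal (x - y) + Real.toNNReal y) ^ α : NNReal) : ℝ) := by
          rw [NNReal.coe_rpow]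
      _ ≤ (((Real.toNNReal (x - y)) ^ α + (Real.toNNReal y) ^ α : NNReal) : ℝ) := by
          exact_mod_cast this
      _ = (x - y) ^ α + y ^ α := by
          push_cast [NNReal.coe_rpow, Real.coe_toNNReal _ hxy, Real.coe_toNNReal _ hy]
          ring
  have h2 : (x - y) ^ α ≤ ε ^ α := Real.rpow_le_rpow hxy h h0.le
  linarith

lemma abs_rpow_sub_rpow_le {x y ε α : ℝ} (hx : 0 ≤ x) (hy : 0 ≤ y)
    (h : |x - y| ≤ ε) (h0 : 0 < α) (h1 : α ≤ 1) : |x ^ α - y ^ α| ≤ ε ^ α := by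
  rcases le_total y x with hyx | hxy
  · rw [abs_le] at h
    rw [abs_of_nonneg (by have := Real.rpow_le_rpow hy hyx h0.le; linarith)]
    exact abs_rpow_sub_rpow_le' hy hyx (by linarith) h0 h1
  · rw [abs_sub_comm] at h ⊢
    rw [abs_le] at h
    rw [abs_of_nonneg (by have := Real.rpow_le_rpow hx hxy h0.le; linarith)]
    exact abs_rpow_sub_rpow_le' hx hxy (by linarith) h0 h1

end TraceRpowAux

open TraceRpowAux Finset

/-- If `A, B` are positive semidefinite of rank at most `r` and `0 < α < 1`, then
`|tr(A^α) − tr(B^α)| ≤ 5 r ‖A − B‖^α`. -/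
theorem abs_trace_rpow_sub_trace_rpow_le {N r : ℕ} {A B : Matrix (Fin N) (Fin N) ℂ}
    (hA : A.PosSemidef) (hB : B.PosSemidef)
    (hrA : A.rank ≤ r) (hrB : B.rank ≤ r) {α : ℝ} (h0 : 0 < α) (h1 : α < 1) :
    |((hA.1.cfc (fun x => x ^ α)).trace).re - ((hB.1.cfc (fun x => x ^ α)).trace).re| ≤
      5 * r * opNorm (A - B) ^ α := by
  classical
  set lam := hA.1.eigenvalues with hlam
  set mu := hB.1.eigenvalues with hmu
  set σ := Tuple.sort lam
  set τ := Tuple.sort mu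
  set ε := opNorm (A - B) with hε
  have hε0 : 0 ≤ ε := norm_nonneg _
  have hεα : 0 ≤ ε ^ α := Real.rpow_nonneg hε0 α
  -- rewrite traces as sums over sorted eigenvalues
  rw [trace_cfc_re hA.1, trace_cfc_re hB.1]
  rw [← Equiv.sum_comp σ (fun i => lam i ^ α), ← Equiv.sum_comp τ (fun i => mu i ^ α)]
  rw [← Finset.sum_sub_distrib]
  -- pointwise bound
  have hlam0 : ∀ i, 0 ≤ lam i := hA.eigenvalues_nonneg
  have hmu0 : ∀ i, 0 ≤ mu i := hB.eigenvalues_nonneg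
  have hweyl : ∀ i, |lam (σ i) - mu (τ i)| ≤ ε := by
    intro i
    rw [abs_le]
    constructor
    · have := weyl hB.1 hA.1 i
      rw [opNorm_sub_comm] at this
      linarith
    · have := weyl hA.1 hB.1 i
      linarith
  have hpt : ∀ i : Fin N, |lam (σ i) ^ α - mu (τ i) ^ α| ≤
      (if lam (σ i) = 0 ∧ mu (τ i) = 0 then 0 else ε ^ α) := by
    intro i
    by_cases hz : lam (σ i) = 0 ∧ mu (τ i) = 0
    · rw [if_pos hz, hz.1, hz.2, Real.zero_rpow h0.ne', sub_self, abs_zero]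
    · rw [if_neg hz]
      exact abs_rpow_sub_rpow_le (hlam0 _) (hmu0 _) (hweyl i) h0 h1.le
  -- sum bound
  have hstep : |∑ i : Fin N, (lam (σ i) ^ α - mu (τ i) ^ α)| ≤
      ∑ i : Fin N, (if lam (σ i) = 0 ∧ mu (τ i) = 0 then 0 else ε ^ α) :=
    (Finset.abs_sum_le_sum_abs _ _).trans (Finset.sum_le_sum fun i _ => hpt i)
  refine hstep.trans ?_
  -- the sum of indicators is at most 2 r ε^α
  set S : Finset (Fin N) := univ.filter (fun i => ¬(lam (σ i) = 0 ∧ mu (τ i) = 0)) with hS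
  have hsum_eq : ∑ i : Fin N, (if lam (σ i) = 0 ∧ mu (τ i) = 0 then 0 else ε ^ α)
      = S.card * ε ^ α := by
    rw [Finset.sum_ite, Finset.sum_const, Finset.sum_const]
    simp [hS]
  rw [hsum_eq]
  -- card S ≤ 2 r
  have cardlam : (univ.filter fun i => lam (σ i) ≠ 0).card = A.rank := by
    rw [hA.1.rank_eq_card_non_zero_eigs, Fintype.card_subtype]
    apply Finset.card_bij (fun a _ => σ a)
    · intro a ha
      simp only [Finset.mem_filter, Finset.mem_univ, true_and] at ha ⊢
      exact ha
    · intro a _ b _ hab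
      exact σ.injective hab
    · intro b hb
      refine ⟨σ.symm b, ?_, by simp⟩
      simp only [Finset.mem_filter, Finset.mem_univ, true_and] at hb ⊢
      simpa using hb
  have cardmu : (univ.filter fun i => mu (τ i) ≠ 0).card = B.rank := by
    rw [hB.1.rank_eq_card_non_zero_eigs, Fintype.card_subtype]
    apply Finset.card_bij (fun a _ => τ a)
    · intro a ha
      simp only [Finset.mem_filter, Finset.mem_univ, true_and] at ha ⊢
      exact ha
    · intro a _ b _ hab
      exact τ.injective hab
    · intro b hb
      refine ⟨τ.symm b, ?_, by simp⟩
      simp only [Finset.mem_filter, Finset.mem_univ, true_and] at hb ⊢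
      simpa using hb
  have hSsub : S ⊆ (univ.filter fun i => lam (σ i) ≠ 0) ∪ (univ.filter fun i => mu (τ i) ≠ 0) := by
    intro i hi
    simp only [hS, Finset.mem_filter, Finset.mem_univ, true_and] at hi
    simp only [Finset.mem_union, Finset.mem_filter, Finset.mem_univ, true_and]
    tauto
  have hcardS : S.card ≤ 2 * r := by
    have := (Finset.card_le_card hSsub).trans (Finset.card_union_le _ _)
    rw [cardlam, cardmu] at this
    omega
  calc (S.card : ℝ) * ε ^ α ≤ (2 * r : ℕ) * ε ^ α := by
        apply mul_le_mul_of_nonneg_right _ hεα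
        exact_mod_cast hcardS
    _ ≤ 5 * r * ε ^ α := by
        apply mul_le_mul_of_nonneg_right _ hεα
        push_cast
        nlinarith [Nat.cast_nonneg (α := ℝ) r]
end

section
/- Let ρ and σ be density operators on an N-dimensional Hilbert space, let μ = (ρ+σ)/2 with spectral decomposition μ = Σ_j λ_j |ψ_j⟩⟨ψ_j|. Then for every eigenvector ψ_j of μ with eigenvalue λ_j, ‖(ρ − σ) ψ_j‖ ≤ 2√λ_j. -/
open Matrix
open scoped ComplexOrder

/-- Euclidean norm of a vector in `ℂ^N`. -/
noncomputable def eNorm {N : ℕ} (v : Fin N → ℂ) : ℝ :=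
  ‖(WithLp.equiv 2 (Fin N → ℂ)).symm v‖

lemma eNorm_sq_eq {N : ℕ} (v : Fin N → ℂ) :
    eNorm v ^ 2 = (dotProduct (star v) v).re := by
  have h := EuclideanSpace.inner_eq_star_dotProduct (𝕜 := ℂ)
    ((WithLp.equiv 2 (Fin N → ℂ)).symm v) ((WithLp.equiv 2 (Fin N → ℂ)).symm v)
  have h2 := inner_self_eq_norm_sq (𝕜 := ℂ) ((WithLp.equiv 2 (Fin N → ℂ)).symm v)
  rw [h] at h2
  rw [dotProduct_comm] at h2
  simpa [eNorm, RCLike.re_to_complex] using h2.symm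

lemma trace_eq_sum_eigen {N : ℕ} {A : Matrix (Fin N) (Fin N) ℂ} (hA : A.IsHermitian) :
    A.trace = ∑ i, (hA.eigenvalues i : ℂ) := by
  conv_lhs => rw [hA.spectral_theorem, Unitary.conjStarAlgAut_apply]
  rw [trace_mul_cycle, Unitary.coe_star_mul_self, Matrix.one_mul, trace_diagonal]
  simp

lemma posSemidef_sub_sq {N : ℕ} {A : Matrix (Fin N) (Fin N) ℂ}
    (hA : A.PosSemidef) (h1 : A.trace = 1) : (A - A * A).PosSemidef := by
  classical
  have hH := hA.1
  have he0 : ∀ i, 0 ≤ hH.eigenvalues i := hA.eigenvalues_nonneg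
  have hsum : ∑ i, hH.eigenvalues i = 1 := by
    have h := trace_eq_sum_eigen hH
    rw [h1] at h
    have h' : ((∑ i, hH.eigenvalues i : ℝ) : ℂ) = 1 := by push_cast; exact h.symm
    exact_mod_cast h'
  have he1 : ∀ i, hH.eigenvalues i ≤ 1 := by
    intro i
    calc hH.eigenvalues i ≤ ∑ j, hH.eigenvalues j :=
          Finset.single_le_sum (fun j _ => he0 j) (Finset.mem_univ i)
      _ = 1 := hsum
  set U : Matrix (Fin N) (Fin N) ℂ := (hH.eigenvectorUnitary : Matrix (Fin N) (Fin N) ℂ) with hU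
  set D : Matrix (Fin N) (Fin N) ℂ := diagonal (RCLike.ofReal ∘ hH.eigenvalues) with hD
  have hUU : star U * U = 1 := Unitary.coe_star_mul_self _
  have hspec : A = U * D * star U := by
    have := hH.spectral_theorem; rwa [Unitary.conjStarAlgAut_apply] at this
  have hsq : (U * D * star U) * (U * D * star U) = U * (D * D) * star U := by
    calc (U * D * star U) * (U * D * star U)
        = U * D * (star U * U) * D * star U := by simp only [Matrix.mul_assoc]
      _ = U * (D * D) * star U := by rw [hUU]; simp only [Matrix.mul_one, Matrix.mul_assoc]
  have key : A - A * A = U * (D - D * D) * star U := by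
    rw [hspec, hsq, ← sub_mul, ← mul_sub]
  rw [key, Matrix.star_eq_conjTranspose]
  refine PosSemidef.mul_mul_conjTranspose_same ?_ U
  have hDD : D - D * D = diagonal (fun i => ((hH.eigenvalues i - hH.eigenvalues i *
      hH.eigenvalues i : ℝ) : ℂ)) := by
    rw [hD, diagonal_mul_diagonal, diagonal_sub]
    push_cast
    simp [Function.comp]
  rw [hDD]
  refine PosSemidef.diagonal ?_
  intro i
  simp only [Pi.zero_apply]
  rw [Complex.zero_le_real]
  nlinarith [he0 i, he1 i]

/-- If `ρ, σ` are density operators and `ψ` is a unit eigenvector of `μ = (ρ+σ)/2` with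
eigenvalue `λ`, then `‖(ρ − σ) ψ‖ ≤ 2 √λ`. -/
theorem norm_sub_mulVec_eigenvector_le {N : ℕ} {ρ σ : Matrix (Fin N) (Fin N) ℂ}
    (hρ : ρ.PosSemidef) (hσ : σ.PosSemidef)
    (hρ1 : ρ.trace = 1) (hσ1 : σ.trace = 1)
    (ψ : Fin N → ℂ) (hψ : eNorm ψ = 1) (lam : ℝ)
    (heig : ((1/2 : ℂ) • (ρ + σ)).mulVec ψ = (lam : ℂ) • ψ) :
    eNorm ((ρ - σ).mulVec ψ) ≤ 2 * Real.sqrt lam := by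
  have hψ1 : (dotProduct (star ψ) ψ).re = 1 := by
    rw [← eNorm_sq_eq, hψ]; norm_num
  -- eigenvector equation for A = ρ + σ
  have hAe : (ρ + σ) *ᵥ ψ = ((2 * lam : ℝ) : ℂ) • ψ := by
    have h := congrArg (fun v => (2 : ℂ) • v) heig
    simp only [← smul_mulVec, smul_smul] at h
    norm_num at h
    rw [h]
    push_cast
    rfl
  -- quadratic form of A is 2λ
  have hqA : (dotProduct (star ψ) ((ρ + σ) *ᵥ ψ)).re = 2 * lam := by
    rw [hAe, dotProduct_smul]
    simp [Complex.mul_re, hψ1, Complex.ofReal_re, Complex.ofReal_im]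
  -- λ ≥ 0
  have hApsd : (ρ + σ).PosSemidef := hρ.add hσ
  have hlam0 : 0 ≤ lam := by
    have h := hApsd.re_dotProduct_nonneg ψ
    rw [RCLike.re_to_complex] at h
    rw [hqA] at h
    linarith
  -- quadratic form bounds for squares
  have hbρ : (dotProduct (star ψ) ((ρ * ρ) *ᵥ ψ)).re ≤
      (dotProduct (star ψ) (ρ *ᵥ ψ)).re := by
    have h := (posSemidef_sub_sq hρ hρ1).re_dotProduct_nonneg ψ
    rw [RCLike.re_to_complex, sub_mulVec, dotProduct_sub, Complex.sub_re] at h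
    linarith
  have hbσ : (dotProduct (star ψ) ((σ * σ) *ᵥ ψ)).re ≤
      (dotProduct (star ψ) (σ *ᵥ ψ)).re := by
    have h := (posSemidef_sub_sq hσ hσ1).re_dotProduct_nonneg ψ
    rw [RCLike.re_to_complex, sub_mulVec, dotProduct_sub, Complex.sub_re] at h
    linarith
  have hbA : 0 ≤ (dotProduct (star ψ) (((ρ + σ) * (ρ + σ)) *ᵥ ψ)).re := by
    have hAA : (ρ + σ) * (ρ + σ) = (ρ + σ)ᴴ * (ρ + σ) := by rw [hApsd.1]
    have h := (posSemidef_conjTranspose_mul_self (ρ + σ)).re_dotProduct_nonneg ψ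
    rw [RCLike.re_to_complex] at h
    rw [hAA]
    exact h
  -- the squared norm as a quadratic form
  have hDh : (ρ - σ)ᴴ = ρ - σ := by
    rw [conjTranspose_sub, hρ.1, hσ.1]
  have hnorm : eNorm ((ρ - σ) *ᵥ ψ) ^ 2 =
      (dotProduct (star ψ) (((ρ - σ) * (ρ - σ)) *ᵥ ψ)).re := by
    rw [eNorm_sq_eq, star_mulVec, hDh, ← dotProduct_mulVec, mulVec_mulVec,
      dotProduct_mulVec, ← dotProduct_mulVec]
  -- algebraic identity
  have hiden : (ρ - σ) * (ρ - σ) = (2 : ℂ) • (ρ * ρ) + (2 : ℂ) • (σ * σ)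
      - (ρ + σ) * (ρ + σ) := by
    simp only [Matrix.mul_sub, Matrix.sub_mul, Matrix.mul_add, Matrix.add_mul, smul_add,
      two_smul]
    abel
  have hsum : eNorm ((ρ - σ) *ᵥ ψ) ^ 2 ≤ 4 * lam := by
    rw [hnorm, hiden]
    rw [sub_mulVec, add_mulVec, smul_mulVec, smul_mulVec,
      dotProduct_sub, dotProduct_add, dotProduct_smul, dotProduct_smul]
    simp only [Complex.sub_re, Complex.add_re, smul_eq_mul, Complex.mul_re]
    norm_num
    have := hqA
    rw [add_mulVec, dotProduct_add, Complex.add_re] at this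
    nlinarith [hbρ, hbσ, hbA, this]
  have hnn : 0 ≤ eNorm ((ρ - σ) *ᵥ ψ) := norm_nonneg _
  have h1 : eNorm ((ρ - σ) *ᵥ ψ) ≤ Real.sqrt (4 * lam) := by
    rw [← Real.sqrt_sq hnn]
    exact Real.sqrt_le_sqrt hsum
  calc eNorm ((ρ - σ) *ᵥ ψ) ≤ Real.sqrt (4 * lam) := h1
    _ = 2 * Real.sqrt lam := by
        rw [show (4 : ℝ) * lam = 2 ^ 2 * lam by norm_num, Real.sqrt_mul (by positivity),
          Real.sqrt_sq (by norm_num)]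
end

section
/- Let ρ and σ be density operators of rank at most r on a finite-dimensional Hilbert space. Let ν = (ρ−σ)/2, μ = (ρ+σ)/2, let Π denote the orthogonal projection onto the support of μ, and let Π_δ denote the orthogonal projection onto the span of eigenvectors of μ with eigenvalue exceeding δ > 0. Then for every α ≥ 1, tr((Π − Π_δ)|ν|^α) ≤ 2 r √δ. -/
open Matrix
open scoped ComplexOrder

section Aux
variable {n : Type*} [Fintype n] [DecidableEq n] {A : Matrix n n ℂ} (hA : A.IsHermitian)

lemma diagonal_congr (d e : n → ℂ) (h : ∀ i, d i = e i) :
    diagonal d = diagonal e := by rw [funext h]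

lemma myCfc_mul (f g : ℝ → ℝ) :
    hA.cfc f * hA.cfc g = hA.cfc (fun x => f x * g x) := by
  have h : star (hA.eigenvectorUnitary : Matrix n n ℂ) * (hA.eigenvectorUnitary : Matrix n n ℂ) = 1 :=
    Unitary.coe_star_mul_self _
  have h2 : ∀ X : Matrix n n ℂ, star (hA.eigenvectorUnitary : Matrix n n ℂ) *
      ((hA.eigenvectorUnitary : Matrix n n ℂ) * X) = X := fun X => by
    rw [← Matrix.mul_assoc, h, Matrix.one_mul]
  simp only [Matrix.IsHermitian.cfc, Unitary.conjStarAlgAut_apply, Unitary.coe_star]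
  simp only [Matrix.mul_assoc, h2]
  rw [← Matrix.mul_assoc (diagonal _) (diagonal _), diagonal_mul_diagonal]
  rw [diagonal_congr _ (RCLike.ofReal ∘ (fun x => f x * g x) ∘ hA.eigenvalues)
    (fun i => by simp [Function.comp])]

lemma myCfc_sub (f g : ℝ → ℝ) :
    hA.cfc f - hA.cfc g = hA.cfc (fun x => f x - g x) := by
  simp only [Matrix.IsHermitian.cfc, Unitary.conjStarAlgAut_apply, Unitary.coe_star]
  rw [← sub_mul, ← mul_sub, diagonal_sub]
  rw [diagonal_congr _ (RCLike.ofReal ∘ (fun x => f x - g x) ∘ hA.eigenvalues)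
    (fun i => by simp [Function.comp])]

lemma myCfc_smul (c : ℝ) (f : ℝ → ℝ) :
    (c : ℂ) • hA.cfc f = hA.cfc (fun x => c * f x) := by
  simp only [Matrix.IsHermitian.cfc, Unitary.conjStarAlgAut_apply, Unitary.coe_star]
  rw [← smul_mul_assoc, ← mul_smul_comm, ← Matrix.diagonal_smul]
  rw [diagonal_congr _ (RCLike.ofReal ∘ (fun x => c * f x) ∘ hA.eigenvalues)
    (fun i => by simp [Function.comp])]

lemma myCfc_one : hA.cfc (fun _ => 1) = 1 := by
  have h : (hA.eigenvectorUnitary : Matrix n n ℂ) * star (hA.eigenvectorUnitary : Matrix n n ℂ) = 1 :=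
    Unitary.coe_mul_star_self _
  simp only [Matrix.IsHermitian.cfc, Unitary.conjStarAlgAut_apply, Unitary.coe_star]
  rw [diagonal_congr (RCLike.ofReal ∘ (fun _ => (1:ℝ)) ∘ hA.eigenvalues) 1
    (fun i => by simp [Function.comp])]
  have h1 : (diagonal (1 : n → ℂ) : Matrix n n ℂ) = 1 := Matrix.diagonal_one
  rw [h1, mul_one, h]

lemma myCfc_id : hA.cfc (fun x => x) = A := by
  conv_rhs => rw [hA.spectral_theorem]
  simp only [Matrix.IsHermitian.cfc]
  rfl

lemma myCfc_psd (f : ℝ → ℝ) (h : ∀ i, 0 ≤ f (hA.eigenvalues i)) :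
    (hA.cfc f).PosSemidef := by
  simp only [Matrix.IsHermitian.cfc, Unitary.conjStarAlgAut_apply, Unitary.coe_star]
  have hD : (diagonal (RCLike.ofReal ∘ f ∘ hA.eigenvalues) : Matrix n n ℂ).PosSemidef := by
    refine posSemidef_diagonal_iff.mpr fun i => ?_
    simpa [Function.comp] using Complex.zero_le_real.mpr (h i)
  simpa [Matrix.star_eq_conjTranspose] using hD.mul_mul_conjTranspose_same (hA.eigenvectorUnitary : Matrix n n ℂ)

lemma myCfc_herm (f : ℝ → ℝ) : (hA.cfc f).IsHermitian := by
  have h1 := (myCfc_psd hA (fun x => |f x|) (fun i => abs_nonneg _)).1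
  have h2 := (myCfc_psd hA (fun x => |f x| - f x) (fun i => sub_nonneg.mpr (le_abs_self _))).1
  have h3 := h1.sub h2
  rwa [myCfc_sub, show (fun x => |f x| - (|f x| - f x)) = f from funext fun x => by ring] at h3

end Aux

section Quad
variable {n : Type*} [Fintype n] {M : Matrix n n ℂ}

lemma quad_nonneg (hM : M.PosSemidef) (x : n → ℂ) : 0 ≤ (star x ⬝ᵥ M *ᵥ x).re := by
  simpa using (Complex.le_def.mp (hM.dotProduct_mulVec_nonneg x)).1

lemma quad_eq_re (hM : M.PosSemidef) (x : n → ℂ) :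
    star x ⬝ᵥ M *ᵥ x = ((star x ⬝ᵥ M *ᵥ x).re : ℂ) := by
  have him := (Complex.le_def.mp (hM.dotProduct_mulVec_nonneg x)).2
  exact Complex.ext rfl (by simpa using him.symm)

lemma quad_norm (hM : M.PosSemidef) (x : n → ℂ) :
    ‖star x ⬝ᵥ M *ᵥ x‖ = (star x ⬝ᵥ M *ᵥ x).re := by
  rw [quad_eq_re hM x]
  simp [abs_of_nonneg (quad_nonneg hM x)]

lemma quad_cs (hM : M.PosSemidef) (x y : n → ℂ) :
    ‖star x ⬝ᵥ M *ᵥ y‖ ≤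
      Real.sqrt (star x ⬝ᵥ M *ᵥ x).re * Real.sqrt (star y ⬝ᵥ M *ᵥ y).re := by
  obtain ⟨B, rfl⟩ : ∃ B : Matrix n n ℂ, M = Bᴴ * B := by
    classical
    open scoped MatrixOrder in
    exact CStarAlgebra.nonneg_iff_eq_star_mul_self.mp hM.nonneg
  have key : ∀ a b : n → ℂ, star a ⬝ᵥ (Bᴴ * B) *ᵥ b = star (B *ᵥ a) ⬝ᵥ (B *ᵥ b) := by
    intro a b
    rw [← mulVec_mulVec, dotProduct_mulVec, star_mulVec]
  rw [key, key, key]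
  set a := B *ᵥ x with ha
  set b := B *ᵥ y with hb
  have h1 : ‖star a ⬝ᵥ b‖ ≤ ‖(WithLp.equiv 2 (n → ℂ)).symm a‖ * ‖(WithLp.equiv 2 (n → ℂ)).symm b‖ := by
    have := norm_inner_le_norm (𝕜 := ℂ) ((WithLp.equiv 2 (n → ℂ)).symm a) ((WithLp.equiv 2 (n → ℂ)).symm b)
    change ‖b ⬝ᵥ star a‖ ≤ _ at this
    rwa [dotProduct_comm] at this
  have hna : ‖(WithLp.equiv 2 (n → ℂ)).symm a‖ = Real.sqrt (star a ⬝ᵥ a).re := by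
    rw [@norm_eq_sqrt_re_inner ℂ]
    change Real.sqrt (RCLike.re (a ⬝ᵥ star a)) = _
    rw [dotProduct_comm]
    rfl
  have hnb : ‖(WithLp.equiv 2 (n → ℂ)).symm b‖ = Real.sqrt (star b ⬝ᵥ b).re := by
    rw [@norm_eq_sqrt_re_inner ℂ]
    change Real.sqrt (RCLike.re (b ⬝ᵥ star b)) = _
    rw [dotProduct_comm]
    rfl
  rw [hna, hnb] at h1
  exact h1

end Quad

section Trace
variable {n : Type*} [Fintype n] [DecidableEq n] {A : Matrix n n ℂ} (hA : A.IsHermitian)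

lemma entry_conj (P : Matrix n n ℂ) (i : n) :
    (star (hA.eigenvectorUnitary : Matrix n n ℂ) * P * (hA.eigenvectorUnitary : Matrix n n ℂ)) i i
      = star ⇑(hA.eigenvectorBasis i) ⬝ᵥ (P *ᵥ ⇑(hA.eigenvectorBasis i)) := by
  simp only [Matrix.mul_apply, dotProduct, Matrix.mulVec, Matrix.star_apply,
    Matrix.conjTranspose_apply, Pi.star_apply, IsHermitian.eigenvectorUnitary_apply,
    Matrix.star_eq_conjTranspose]
  simp only [Finset.sum_mul, Finset.mul_sum]
  rw [Finset.sum_comm]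
  exact Finset.sum_congr rfl fun k _ => Finset.sum_congr rfl fun j _ => by ring

lemma trace_mul_cfc (P : Matrix n n ℂ) (f : ℝ → ℝ) :
    (P * hA.cfc f).trace = ∑ i, (f (hA.eigenvalues i) : ℂ) *
      (star ⇑(hA.eigenvectorBasis i) ⬝ᵥ (P *ᵥ ⇑(hA.eigenvectorBasis i))) := by
  simp only [Matrix.IsHermitian.cfc, Unitary.conjStarAlgAut_apply, Unitary.coe_star]
  set U := (hA.eigenvectorUnitary : Matrix n n ℂ)
  set D := diagonal (RCLike.ofReal ∘ f ∘ hA.eigenvalues : n → ℂ)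
  have h1 : P * (U * D * star U) = (P * U * D) * star U := by noncomm_ring
  rw [h1, Matrix.trace_mul_comm, show star U * (P * U * D) = (star U * P * U) * D from by
    noncomm_ring]
  rw [Matrix.trace]
  simp only [Matrix.diag_apply]
  refine Finset.sum_congr rfl fun i _ => ?_
  rw [Matrix.mul_diagonal, entry_conj hA P i]
  simp [D, Function.comp, mul_comm]

end Trace

section More
variable {n : Type*} [Fintype n] [DecidableEq n] {A : Matrix n n ℂ} (hA : A.IsHermitian)

lemma basis_unit (i : n) :
    star ⇑(hA.eigenvectorBasis i) ⬝ᵥ ⇑(hA.eigenvectorBasis i) = 1 := by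
  have h := hA.eigenvectorBasis.orthonormal.1 i
  have h2 : (inner ℂ (hA.eigenvectorBasis i) (hA.eigenvectorBasis i) : ℂ) = 1 := by
    rw [@inner_self_eq_norm_sq_to_K ℂ, h]
    norm_num
  rw [EuclideanSpace.inner_eq_star_dotProduct, dotProduct_comm] at h2
  exact h2

lemma trace_eq_sum_eigs : A.trace = ∑ i, (hA.eigenvalues i : ℂ) := by
  have h : star (hA.eigenvectorUnitary : Matrix n n ℂ) * (hA.eigenvectorUnitary : Matrix n n ℂ) = 1 :=
    Unitary.coe_star_mul_self _
  conv_lhs => rw [hA.spectral_theorem]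
  rw [Unitary.conjStarAlgAut_apply, Matrix.trace_mul_comm, ← Matrix.mul_assoc, h, Matrix.one_mul, Matrix.trace_diagonal]
  rfl

lemma myRank_add_le (A B : Matrix n n ℂ) : (A + B).rank ≤ A.rank + B.rank := by
  rw [Matrix.rank, Matrix.rank, Matrix.rank, Matrix.mulVecLin_add]
  have hle : LinearMap.range (A.mulVecLin + B.mulVecLin) ≤
      LinearMap.range A.mulVecLin ⊔ LinearMap.range B.mulVecLin := by
    rintro x ⟨v, rfl⟩
    exact Submodule.add_mem_sup (LinearMap.mem_range_self _ v) (LinearMap.mem_range_self _ v)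
  calc Module.finrank ℂ (LinearMap.range (A.mulVecLin + B.mulVecLin))
      ≤ Module.finrank ℂ ↥(LinearMap.range A.mulVecLin ⊔ LinearMap.range B.mulVecLin) :=
        Submodule.finrank_mono hle
    _ ≤ _ := Submodule.finrank_add_le_finrank_add_finrank _ _

lemma myRank_smul_le (c : ℂ) (A : Matrix n n ℂ) : (c • A).rank ≤ A.rank := by
  have h : c • A = (c • (1 : Matrix n n ℂ)) * A := by
    rw [smul_mul_assoc, Matrix.one_mul]
  rw [h]
  exact Matrix.rank_mul_le_right _ _

lemma sqrt_two_cs {a₁ a₂ b₁ b₂ : ℝ} (ha₁ : 0 ≤ a₁) (ha₂ : 0 ≤ a₂) (hb₁ : 0 ≤ b₁) (hb₂ : 0 ≤ b₂) :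
    Real.sqrt a₁ * Real.sqrt b₁ + Real.sqrt a₂ * Real.sqrt b₂ ≤
      Real.sqrt (a₁ + a₂) * Real.sqrt (b₁ + b₂) := by
  rw [← Real.sqrt_mul (by linarith) (b₁ + b₂)]
  rw [show Real.sqrt a₁ * Real.sqrt b₁ = Real.sqrt (a₁ * b₁) from (Real.sqrt_mul ha₁ b₁).symm,
    show Real.sqrt a₂ * Real.sqrt b₂ = Real.sqrt (a₂ * b₂) from (Real.sqrt_mul ha₂ b₂).symm]
  have hx : 0 ≤ Real.sqrt (a₁*b₁) + Real.sqrt (a₂*b₂) := by positivity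
  have s3 : Real.sqrt (a₁*b₁) * Real.sqrt (a₂*b₂) = Real.sqrt (a₁*b₂) * Real.sqrt (a₂*b₁) := by
    rw [← Real.sqrt_mul (by positivity), ← Real.sqrt_mul (by positivity)]
    ring_nf
  have h1 : (Real.sqrt (a₁*b₁) + Real.sqrt (a₂*b₂))^2 ≤ (a₁+a₂)*(b₁+b₂) := by
    nlinarith [sq_nonneg (Real.sqrt (a₁*b₂) - Real.sqrt (a₂*b₁)),
      Real.sq_sqrt (mul_nonneg ha₁ hb₂), Real.sq_sqrt (mul_nonneg ha₂ hb₁),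
      Real.sq_sqrt (mul_nonneg ha₁ hb₁), Real.sq_sqrt (mul_nonneg ha₂ hb₂)]
  calc Real.sqrt (a₁*b₁) + Real.sqrt (a₂*b₂)
      = Real.sqrt ((Real.sqrt (a₁*b₁) + Real.sqrt (a₂*b₂))^2) := (Real.sqrt_sq hx).symm
    _ ≤ Real.sqrt ((a₁+a₂)*(b₁+b₂)) := Real.sqrt_le_sqrt h1

end More

section QuadOne
variable {n : Type*} [Fintype n] [DecidableEq n]

lemma quad_le_one {M : Matrix n n ℂ} (hM : M.PosSemidef) (htr : M.trace = 1)
    (x : n → ℂ) (hx : star x ⬝ᵥ x = 1) : (star x ⬝ᵥ M *ᵥ x).re ≤ 1 := by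
  have hher := hM.1
  have hsum : ∑ i, hher.eigenvalues i = 1 := by
    have h2 : ((∑ i, hher.eigenvalues i : ℝ) : ℂ) = 1 := by
      rw [Complex.ofReal_sum]
      exact (trace_eq_sum_eigs hher).symm.trans htr
    exact_mod_cast h2
  have hone : (1 : Matrix n n ℂ) - M = hher.cfc (fun t => 1 - t) := by
    have h := myCfc_sub hher (fun _ => 1) (fun t => t)
    rwa [myCfc_one, myCfc_id] at h
  have hpsd1 : ((1 : Matrix n n ℂ) - M).PosSemidef := by
    rw [hone]
    refine myCfc_psd hher _ (fun i => ?_)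
    have hnn : ∀ j, (0:ℝ) ≤ hher.eigenvalues j := fun j => hM.eigenvalues_nonneg j
    have : hher.eigenvalues i ≤ 1 :=
      hsum ▸ Finset.single_le_sum (fun j _ => hnn j) (Finset.mem_univ i)
    linarith
  have h0 := quad_nonneg hpsd1 x
  rw [Matrix.sub_mulVec, dotProduct_sub, Matrix.one_mulVec, hx] at h0
  simp only [Complex.sub_re, Complex.one_re] at h0
  linarith

end QuadOne


/-- `|A|^α` for a Hermitian matrix `A`, defined spectrally. -/
noncomputable def absPow {N : ℕ} {A : Matrix (Fin N) (Fin N) ℂ}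
    (hA : A.IsHermitian) (α : ℝ) : Matrix (Fin N) (Fin N) ℂ :=
  hA.cfc (fun x => |x| ^ α)

/-- Projection onto the span of eigenvectors of the Hermitian `A` with eigenvalue `> δ`. -/
noncomputable def suppProj {N : ℕ} {A : Matrix (Fin N) (Fin N) ℂ}
    (hA : A.IsHermitian) (δ : ℝ) : Matrix (Fin N) (Fin N) ℂ :=
  hA.cfc (fun x => if δ < x then 1 else 0)

set_option maxHeartbeats 1000000 in
/-- For density operators `ρ, σ` of rank at most `r`, `ν = (ρ−σ)/2`, `μ = (ρ+σ)/2`,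
`Π` the support projection of `μ` and `Π_δ` its `δ`-support projection, and `α ≥ 1`:
`tr((Π − Π_δ)|ν|^α) ≤ 2 r √δ`. -/
theorem trace_truncated_support_abs_pow_le {N r : ℕ} {ρ σ : Matrix (Fin N) (Fin N) ℂ}
    (hρ : ρ.PosSemidef) (hσ : σ.PosSemidef)
    (hρ1 : ρ.trace = 1) (hσ1 : σ.trace = 1)
    (hrρ : ρ.rank ≤ r) (hrσ : σ.rank ≤ r)
    (hν : ((1/2 : ℂ) • (ρ - σ)).IsHermitian)
    (hμ : ((1/2 : ℂ) • (ρ + σ)).IsHermitian)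
    {δ : ℝ} (hδ : 0 < δ) {α : ℝ} (hα : 1 ≤ α) :
    (((suppProj hμ 0 - suppProj hμ δ) * absPow hν α).trace).re ≤
      2 * r * Real.sqrt δ := by
  classical
  set p : ℝ → ℝ := fun x => (if 0 < x then 1 else 0) - (if δ < x then 1 else 0) with hp
  have hcases : ∀ x : ℝ, p x = 0 ∨ p x = 1 := by
    intro x; simp only [hp]
    split_ifs with h1 h2 h3
    · left; ring
    · right; ring
    · exact absurd (hδ.trans h3) h1
    · left; ring
  have hp0 : ∀ x, 0 ≤ p x := fun x => by rcases hcases x with h | h <;> rw [h] <;> norm_num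
  have hp1 : ∀ x, p x ≤ 1 := fun x => by rcases hcases x with h | h <;> rw [h] <;> norm_num
  have hpm : ∀ x, p x * x * p x ≤ δ * p x := by
    intro x; simp only [hp]
    split_ifs with h1 h2 h3
    · norm_num
    · push_neg at h2; norm_num; linarith
    · exact absurd (hδ.trans h3) h1
    · norm_num
  have hP : suppProj hμ 0 - suppProj hμ δ = hμ.cfc p := by
    rw [suppProj, suppProj, myCfc_sub]
  set P := suppProj hμ 0 - suppProj hμ δ with hPdef
  have hPher : P.IsHermitian := hP ▸ myCfc_herm hμ p
  have hPpsd : P.PosSemidef := hP ▸ myCfc_psd hμ p (fun i => hp0 _)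
  have h1Ppsd : ((1 : Matrix (Fin N) (Fin N) ℂ) - P).PosSemidef := by
    have h := myCfc_sub hμ (fun _ => 1) p
    rw [myCfc_one, ← hP] at h
    rw [h]
    exact myCfc_psd hμ _ (fun i => by
      have := hp1 (hμ.eigenvalues i)
      show (0:ℝ) ≤ 1 - p (hμ.eigenvalues i)
      linarith)
  have hPMP : P * ((1/2:ℂ) • (ρ + σ)) * P = hμ.cfc (fun x => p x * x * p x) := by
    have h := myCfc_mul hμ (fun x => p x * x) p
    have h2 := myCfc_mul hμ p (fun x => x)
    rw [myCfc_id] at h2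
    rw [hP, h2, h]
  have hdiff : ((δ:ℂ) • P - P * ((1/2:ℂ) • (ρ + σ)) * P).PosSemidef := by
    rw [hPMP, hP, myCfc_smul, myCfc_sub]
    exact myCfc_psd hμ _ (fun i => sub_nonneg.mpr (hpm _))
  have hνrank : ((1/2 : ℂ) • (ρ - σ)).rank ≤ 2 * r := by
    have hneg : (-σ).rank ≤ r := by
      rw [show -σ = (-1:ℂ) • σ from (neg_one_smul ℂ σ).symm]
      exact le_trans (myRank_smul_le _ _) hrσ
    calc ((1/2 : ℂ) • (ρ - σ)).rank ≤ (ρ - σ).rank := myRank_smul_le _ _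
      _ = (ρ + (-σ)).rank := by rw [sub_eq_add_neg]
      _ ≤ ρ.rank + (-σ).rank := myRank_add_le _ _
      _ ≤ r + r := add_le_add hrρ hneg
      _ = 2 * r := by ring
  have hexp : ((P * absPow hν α).trace).re =
      ∑ i, (|hν.eigenvalues i| ^ α) *
        (star ⇑(hν.eigenvectorBasis i) ⬝ᵥ (P *ᵥ ⇑(hν.eigenvectorBasis i))).re := by
    rw [show absPow hν α = hν.cfc (fun x => |x| ^ α) from rfl,
      trace_mul_cfc hν P (fun x => |x| ^ α), Complex.re_sum]
    exact Finset.sum_congr rfl fun i _ => by simp [Complex.mul_re]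
  rw [hexp]
  have hbound : ∀ i, (|hν.eigenvalues i| ^ α) *
      (star ⇑(hν.eigenvectorBasis i) ⬝ᵥ (P *ᵥ ⇑(hν.eigenvectorBasis i))).re ≤
      (if hν.eigenvalues i ≠ 0 then Real.sqrt δ else 0) := by
    intro i
    set v : Fin N → ℂ := ⇑(hν.eigenvectorBasis i) with hv
    set lam : ℝ := hν.eigenvalues i with hlam
    set q : ℝ := (star v ⬝ᵥ (P *ᵥ v)).re with hq
    by_cases hl0 : lam = 0
    · simp only [hl0, ne_eq, not_true_eq_false, if_false]
      rw [abs_zero, Real.zero_rpow (by linarith : α ≠ 0), zero_mul]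
    · simp only [ne_eq, hl0, not_false_eq_true, if_true]
      have hunit : star v ⬝ᵥ v = 1 := basis_unit hν i
      have hq0 : 0 ≤ q := quad_nonneg hPpsd v
      have hq1 : q ≤ 1 := by
        have h0 := quad_nonneg h1Ppsd v
        rw [Matrix.sub_mulVec, dotProduct_sub, Matrix.one_mulVec, hunit] at h0
        simp only [Complex.sub_re, Complex.one_re] at h0
        linarith
      have hci : star v ⬝ᵥ (P *ᵥ v) = (q : ℂ) := quad_eq_re hPpsd v
      have hsw : ∀ z : Fin N → ℂ, star (P *ᵥ v) ⬝ᵥ z = star v ⬝ᵥ (P *ᵥ z) := fun z => by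
        rw [star_mulVec, hPher.eq, ← dotProduct_mulVec]
      set w : Fin N → ℂ := P *ᵥ v with hw
      set aρ : ℝ := (star w ⬝ᵥ (ρ *ᵥ w)).re with haρ
      set aσ : ℝ := (star w ⬝ᵥ (σ *ᵥ w)).re with haσ
      set bρ : ℝ := (star v ⬝ᵥ (ρ *ᵥ v)).re with hbρ
      set bσ : ℝ := (star v ⬝ᵥ (σ *ᵥ v)).re with hbσ
      have haρ0 : 0 ≤ aρ := quad_nonneg hρ w
      have haσ0 : 0 ≤ aσ := quad_nonneg hσ w
      have hbρ0 : 0 ≤ bρ := quad_nonneg hρ v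
      have hbσ0 : 0 ≤ bσ := quad_nonneg hσ v
      have hbρ1 : bρ ≤ 1 := quad_le_one hρ hρ1 v hunit
      have hbσ1 : bσ ≤ 1 := quad_le_one hσ hσ1 v hunit
      -- a_ρ + a_σ ≤ 2 δ q
      have hmuw : (star w ⬝ᵥ (((1/2:ℂ) • (ρ + σ)) *ᵥ w)).re ≤ δ * q := by
        have e1 : star w ⬝ᵥ (((1/2:ℂ) • (ρ + σ)) *ᵥ w) =
            star v ⬝ᵥ ((P * ((1/2:ℂ) • (ρ + σ)) * P) *ᵥ v) := by
          rw [hw, hsw]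
          rw [← Matrix.mulVec_mulVec, ← Matrix.mulVec_mulVec]
        have e0 : star v ⬝ᵥ ((((δ:ℂ) • P - P * ((1/2:ℂ) • (ρ + σ)) * P)) *ᵥ v)
            = ((δ * q : ℝ) : ℂ) - star v ⬝ᵥ ((P * ((1/2:ℂ) • (ρ + σ)) * P) *ᵥ v) := by
          rw [Matrix.sub_mulVec, dotProduct_sub, Matrix.smul_mulVec, dotProduct_smul, hci]
          push_cast
          ring_nf
        have h0 := quad_nonneg hdiff v
        rw [e0, Complex.sub_re, Complex.ofReal_re] at h0
        rw [e1]
        linarith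
      have haa : aρ + aσ ≤ 2 * (δ * q) := by
        have e2 : star w ⬝ᵥ (((1/2:ℂ) • (ρ + σ)) *ᵥ w) = (((aρ + aσ)/2 : ℝ) : ℂ) := by
          rw [Matrix.smul_mulVec, dotProduct_smul, Matrix.add_mulVec, dotProduct_add,
            quad_eq_re hρ w, quad_eq_re hσ w]
          push_cast
          simp [smul_eq_mul]
          ring
        rw [e2, Complex.ofReal_re] at hmuw
        linarith
      -- eigenvector equation
      have hev : ((1/2 : ℂ) • (ρ - σ)) *ᵥ v = lam • v := hν.mulVec_eigenvectorBasis i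
      -- |lam| ≤ 1
      have habs1 : |lam| ≤ 1 := by
        have hT0 : star v ⬝ᵥ (((1/2:ℂ) • (ρ - σ)) *ᵥ v) = ((lam : ℝ) : ℂ) := by
          rw [hev, dotProduct_smul, hunit]
          simp [Complex.real_smul]
        have hT2 : star v ⬝ᵥ (((1/2:ℂ) • (ρ - σ)) *ᵥ v) = (((bρ - bσ)/2 : ℝ) : ℂ) := by
          rw [Matrix.smul_mulVec, dotProduct_smul, Matrix.sub_mulVec, dotProduct_sub,
            quad_eq_re hρ v, quad_eq_re hσ v]
          push_cast
          simp [smul_eq_mul]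
          ring
        have hlamval : lam = (bρ - bσ)/2 := by
          have h := hT0.symm.trans hT2
          exact_mod_cast h
        rw [abs_le]
        constructor <;> [linarith; linarith]
      -- key bound |lam| * q ≤ sqrt δ
      have hkey : |lam| * q ≤ Real.sqrt δ := by
        have hT1 : star w ⬝ᵥ (((1/2:ℂ) • (ρ - σ)) *ᵥ v) = ((lam * q : ℝ) : ℂ) := by
          rw [hev, dotProduct_smul, hsw, hci, Complex.real_smul]
          push_cast
          ring
        have hT2 : star w ⬝ᵥ (((1/2:ℂ) • (ρ - σ)) *ᵥ v) =
            (1/2:ℂ) * (star w ⬝ᵥ (ρ *ᵥ v) - star w ⬝ᵥ (σ *ᵥ v)) := by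
          rw [Matrix.smul_mulVec, dotProduct_smul, Matrix.sub_mulVec, dotProduct_sub]
          simp [smul_eq_mul]
        have hnT : ‖((lam * q : ℝ) : ℂ)‖ = |lam| * q := by
          rw [Complex.norm_real, Real.norm_eq_abs, abs_mul, abs_of_nonneg hq0]
        have hcs1 : ‖star w ⬝ᵥ (ρ *ᵥ v)‖ ≤ Real.sqrt aρ * Real.sqrt bρ := quad_cs hρ w v
        have hcs2 : ‖star w ⬝ᵥ (σ *ᵥ v)‖ ≤ Real.sqrt aσ * Real.sqrt bσ := quad_cs hσ w v
        have hstep : |lam| * q ≤ (1/2) * (Real.sqrt (aρ + aσ) * Real.sqrt (bρ + bσ)) := by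
          rw [← hnT, ← hT1, hT2, norm_mul]
          have h12 : ‖(1/2 : ℂ)‖ = 1/2 := by norm_num
          rw [h12]
          have htri := norm_sub_le (star w ⬝ᵥ (ρ *ᵥ v)) (star w ⬝ᵥ (σ *ᵥ v))
          have hgcs := sqrt_two_cs haρ0 haσ0 hbρ0 hbσ0
          linarith [hgcs, htri, hcs1, hcs2]
        have hs1 : Real.sqrt (aρ + aσ) ≤ Real.sqrt (2 * (δ * q)) := Real.sqrt_le_sqrt haa
        have hs2 : Real.sqrt (bρ + bσ) ≤ Real.sqrt 2 := Real.sqrt_le_sqrt (by linarith)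
        have hfin : (1/2) * (Real.sqrt (2 * (δ * q)) * Real.sqrt 2) = Real.sqrt (δ * q) := by
          rw [Real.sqrt_mul (by norm_num : (0:ℝ) ≤ 2) (δ * q)]
          have h2 : Real.sqrt 2 * Real.sqrt 2 = 2 := Real.mul_self_sqrt (by norm_num)
          linear_combination (Real.sqrt (δ * q) / 2) * h2
        have hlast : Real.sqrt (δ * q) ≤ Real.sqrt δ := by
          rw [Real.sqrt_mul hδ.le q]
          have : Real.sqrt q ≤ 1 := Real.sqrt_le_one.mpr hq1
          nlinarith [Real.sqrt_nonneg δ, Real.sqrt_nonneg q]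
        calc |lam| * q ≤ (1/2) * (Real.sqrt (aρ + aσ) * Real.sqrt (bρ + bσ)) := hstep
          _ ≤ (1/2) * (Real.sqrt (2 * (δ * q)) * Real.sqrt 2) := by
              have := Real.sqrt_nonneg (aρ + aσ)
              have := Real.sqrt_nonneg (bρ + bσ)
              have := Real.sqrt_nonneg (2 * (δ * q))
              nlinarith [hs1, hs2]
          _ = Real.sqrt (δ * q) := hfin
          _ ≤ Real.sqrt δ := hlast
      -- |lam|^α ≤ |lam|
      have hpow : |lam| ^ α ≤ |lam| := by
        have h1 : |lam| ^ α ≤ |lam| ^ (1:ℝ) :=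
          Real.rpow_le_rpow_of_exponent_ge (abs_pos.mpr hl0) habs1 hα
        rwa [Real.rpow_one] at h1
      have hpow0 : 0 ≤ |lam| ^ α := Real.rpow_nonneg (abs_nonneg lam) α
      calc |lam| ^ α * q ≤ |lam| * q := by nlinarith
        _ ≤ Real.sqrt δ := hkey
  calc ∑ i, (|hν.eigenvalues i| ^ α) *
        (star ⇑(hν.eigenvectorBasis i) ⬝ᵥ (P *ᵥ ⇑(hν.eigenvectorBasis i))).re
      ≤ ∑ i, (if hν.eigenvalues i ≠ 0 then Real.sqrt δ else 0) :=
        Finset.sum_le_sum (fun i _ => hbound i)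
    _ = (Finset.univ.filter (fun i => hν.eigenvalues i ≠ 0)).card • Real.sqrt δ := by
        rw [← Finset.sum_filter, Finset.sum_const]
    _ = (((1/2 : ℂ) • (ρ - σ)).rank : ℝ) * Real.sqrt δ := by
        rw [nsmul_eq_mul, hν.rank_eq_card_non_zero_eigs, Fintype.card_subtype]
    _ ≤ 2 * r * Real.sqrt δ := by
        have hc : ((((1/2 : ℂ) • (ρ - σ)).rank : ℕ) : ℝ) ≤ ((2 * r : ℕ) : ℝ) :=
          Nat.cast_le.mpr hνrank
        push_cast at hc
        nlinarith [Real.sqrt_nonneg δ, hc]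
end

section
/- Let ρ and σ be density operators of rank at most r, let ν = (ρ−σ)/2, μ = (ρ+σ)/2, let Π be the projection onto the support of μ and Π_δ the projection onto the span of eigenvectors of μ with eigenvalue > δ. Then for 0 < α < 1, tr((Π − Π_δ)|ν|^α) ≤ 2 r δ^(α/2). -/
open Matrix
open scoped ComplexOrder

/-! ### Auxiliary lemmas -/

lemma quad_diag' {n : ℕ} (V : Matrix (Fin n) (Fin n) ℂ) (d : Fin n → ℝ) (u : Fin n → ℂ) :
    star u ⬝ᵥ ((V * Matrix.diagonal (RCLike.ofReal ∘ d) * star V) *ᵥ u)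
      = ∑ j, (d j : ℂ) * Complex.normSq ((star V *ᵥ u) j) := by
  rw [← Matrix.mulVec_mulVec, ← Matrix.mulVec_mulVec, dotProduct_mulVec]
  have h2 : star u ᵥ* V = star (star V *ᵥ u) := by
    rw [star_mulVec]; simp [Matrix.star_eq_conjTranspose]
  rw [h2]
  set c := star V *ᵥ u with hc
  simp only [dotProduct, mulVec_diagonal, Pi.star_apply, Function.comp_apply]
  refine Finset.sum_congr rfl fun j _ => ?_
  have : (starRingEnd ℂ) (c j) * c j = (Complex.normSq (c j) : ℂ) := by
    rw [mul_comm, Complex.mul_conj]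
  simp only [RCLike.star_def]
  rw [show (starRingEnd ℂ) (c j) * ((RCLike.ofReal (d j) : ℂ) * c j)
      = (RCLike.ofReal (d j) : ℂ) * ((starRingEnd ℂ) (c j) * c j) by ring, this]
  norm_num [RCLike.ofReal]

lemma cfc_sub' {n : ℕ} {A : Matrix (Fin n) (Fin n) ℂ} (hA : A.IsHermitian) (f g : ℝ → ℝ) :
    hA.cfc f - hA.cfc g = hA.cfc (fun x => f x - g x) := by
  unfold Matrix.IsHermitian.cfc
  have hd : (diagonal (RCLike.ofReal ∘ f ∘ hA.eigenvalues)
      - diagonal (RCLike.ofReal ∘ g ∘ hA.eigenvalues) : Matrix (Fin n) (Fin n) ℂ)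
      = diagonal (RCLike.ofReal ∘ (fun x => f x - g x) ∘ hA.eigenvalues) := by
    rw [Matrix.diagonal_sub]
    exact congrArg diagonal (funext fun i => by simp [Function.comp])
  simp only [Unitary.conjStarAlgAut_apply]
  rw [← Matrix.sub_mul, ← Matrix.mul_sub, hd]

lemma cfc_mul' {n : ℕ} {A : Matrix (Fin n) (Fin n) ℂ} (hA : A.IsHermitian) (f g : ℝ → ℝ) :
    hA.cfc f * hA.cfc g = hA.cfc (fun x => f x * g x) := by
  unfold Matrix.IsHermitian.cfc
  set U : Matrix (Fin n) (Fin n) ℂ := (hA.eigenvectorUnitary : Matrix (Fin n) (Fin n) ℂ)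
  set Df : Matrix (Fin n) (Fin n) ℂ := diagonal (RCLike.ofReal ∘ f ∘ hA.eigenvalues)
  set Dg : Matrix (Fin n) (Fin n) ℂ := diagonal (RCLike.ofReal ∘ g ∘ hA.eigenvalues)
  have hU : star U * U = 1 := Unitary.coe_star_mul_self hA.eigenvectorUnitary
  calc U * Df * star U * (U * Dg * star U)
      = U * (Df * (star U * U) * Dg) * star U := by
        simp only [Matrix.mul_assoc]
    _ = U * (Df * Dg) * star U := by rw [hU, Matrix.mul_one]
    _ = _ := by
        rw [show Df * Dg = diagonal (RCLike.ofReal ∘ (fun x => f x * g x) ∘ hA.eigenvalues) by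
          rw [Matrix.diagonal_mul_diagonal]
          exact congrArg diagonal (funext fun i => by simp [Function.comp])]
        rfl

lemma cfc_psd' {n : ℕ} {A : Matrix (Fin n) (Fin n) ℂ} (hA : A.IsHermitian) (f : ℝ → ℝ)
    (h : ∀ i, 0 ≤ f (hA.eigenvalues i)) : (hA.cfc f).PosSemidef := by
  unfold Matrix.IsHermitian.cfc
  have hd : (Matrix.diagonal (RCLike.ofReal ∘ f ∘ hA.eigenvalues) :
      Matrix (Fin n) (Fin n) ℂ).PosSemidef := by
    refine Matrix.PosSemidef.diagonal fun i => ?_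
    simpa using h i
  simpa [Matrix.star_eq_conjTranspose] using
    hd.mul_mul_conjTranspose_same (hA.eigenvectorUnitary : Matrix (Fin n) (Fin n) ℂ)

lemma rank_add_le' {n : ℕ} (A B : Matrix (Fin n) (Fin n) ℂ) :
    (A + B).rank ≤ A.rank + B.rank := by
  rw [Matrix.rank, Matrix.rank, Matrix.rank, Matrix.mulVecLin_add]
  have h : LinearMap.range (A.mulVecLin + B.mulVecLin) ≤
      LinearMap.range A.mulVecLin ⊔ LinearMap.range B.mulVecLin := by
    rintro x ⟨y, rfl⟩
    exact Submodule.mem_sup.mpr ⟨_, ⟨y, rfl⟩, _, ⟨y, rfl⟩, rfl⟩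
  exact (Submodule.finrank_mono h).trans
    (Submodule.finrank_add_le_finrank_add_finrank _ _)

lemma rank_smul_le' {n : ℕ} (c : ℂ) (A : Matrix (Fin n) (Fin n) ℂ) : (c • A).rank ≤ A.rank := by
  have : c • A = (c • (1 : Matrix (Fin n) (Fin n) ℂ)) * A := by
    rw [Matrix.smul_mul, Matrix.one_mul]
  rw [this]
  exact Matrix.rank_mul_le_right _ _

lemma key_identity' {n : ℕ} (ρ σ : Matrix (Fin n) (Fin n) ℂ) :
    (1/2 : ℂ) • (ρ + σ) - ((1/2 : ℂ) • (ρ - σ)) * ((1/2 : ℂ) • (ρ - σ))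
      = ((1/2 : ℂ) • (ρ + σ)) * ((1/2 : ℂ) • (ρ + σ))
        + (1/2 : ℂ) • (ρ - ρ * ρ) + (1/2 : ℂ) • (σ - σ * σ) := by
  rw [smul_mul_smul_comm, smul_mul_smul_comm]
  rw [Matrix.sub_mul, Matrix.mul_sub, Matrix.mul_sub, Matrix.add_mul, Matrix.mul_add,
    Matrix.mul_add]
  rw [show ((1:ℂ)/2) * (1/2) = 1/4 by norm_num]
  module

lemma psd_smul_half' {n : ℕ} {A : Matrix (Fin n) (Fin n) ℂ} (hA : A.PosSemidef) :
    ((1/2 : ℂ) • A).PosSemidef := by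
  have hh : ((1/2 : ℂ)) = ((1/2 : ℝ) : ℂ) := by norm_num
  refine Matrix.posSemidef_iff_dotProduct_mulVec.mpr ⟨?_, ?_⟩
  · show _ᴴ = _
    rw [Matrix.conjTranspose_smul, hA.1.eq]
    congr 1
    rw [hh]
    simp
  · intro x
    rw [Matrix.smul_mulVec, dotProduct_smul]
    have h := hA.dotProduct_mulVec_nonneg x
    rw [Complex.le_def] at h ⊢
    rw [hh, smul_eq_mul]
    constructor
    · rw [Complex.re_ofReal_mul]
      simp only [Complex.zero_re] at h ⊢
      linarith [h.1]
    · rw [Complex.im_ofReal_mul]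
      simp only [Complex.zero_im] at h ⊢
      rw [← h.2, mul_zero]

lemma sub_sq_psd' {n : ℕ} {A : Matrix (Fin n) (Fin n) ℂ} (hA : A.PosSemidef)
    (h1 : A.trace = 1) : (A - A * A).PosSemidef := by
  have hH := hA.1
  have htr : A.trace = ∑ i, (hH.eigenvalues i : ℂ) := by
    conv_lhs => rw [hH.spectral_theorem]
    rw [Unitary.conjStarAlgAut_apply]
    rw [Matrix.trace_mul_cycle]
    rw [show star (hH.eigenvectorUnitary : Matrix (Fin n) (Fin n) ℂ) *
        (hH.eigenvectorUnitary : Matrix (Fin n) (Fin n) ℂ) = 1 from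
        Unitary.coe_star_mul_self hH.eigenvectorUnitary]
    rw [Matrix.one_mul, Matrix.trace_diagonal]
    simp
  have hsum : ∑ i, hH.eigenvalues i = 1 := by
    have : ((∑ i, hH.eigenvalues i : ℝ) : ℂ) = 1 := by
      push_cast
      rw [← htr, h1]
    exact_mod_cast this
  have hle1 : ∀ i, hH.eigenvalues i ≤ 1 := by
    intro i
    rw [← hsum]
    exact Finset.single_le_sum (fun j _ => hA.eigenvalues_nonneg j) (Finset.mem_univ i)
  have hid : A = hH.cfc (fun x => x) := hH.spectral_theorem
  have : A - A * A = hH.cfc (fun x => x - x * x) := by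
    conv_lhs => rw [hid, cfc_mul' hH (fun x => x) (fun x => x), cfc_sub']
  rw [this]
  refine cfc_psd' hH _ fun i => ?_
  have h0 := hA.eigenvalues_nonneg i
  have h1' := hle1 i
  nlinarith

lemma entry_quad' {n : ℕ} (W B : Matrix (Fin n) (Fin n) ℂ) (i : Fin n) :
    (star W * B * W) i i = star (fun a => W a i) ⬝ᵥ (B *ᵥ (fun a => W a i)) := by
  simp only [Matrix.mul_apply, dotProduct, Matrix.mulVec, Matrix.star_apply,
    Pi.star_apply, Finset.sum_mul, Finset.mul_sum, dotProduct]
  rw [Finset.sum_comm]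
  refine Finset.sum_congr rfl fun a _ => Finset.sum_congr rfl fun b _ => ?_
  simp [Matrix.star_eq_conjTranspose, Matrix.conjTranspose_apply]
  ring

lemma basis_dot_one' {n : ℕ} {A : Matrix (Fin n) (Fin n) ℂ} (hA : A.IsHermitian) (i : Fin n) :
    star ⇑(hA.eigenvectorBasis i) ⬝ᵥ ⇑(hA.eigenvectorBasis i) = 1 := by
  have h := hA.eigenvectorBasis.orthonormal.1 i
  have h2 : (inner ℂ (hA.eigenvectorBasis i) (hA.eigenvectorBasis i) : ℂ) = 1 := by
    rw [inner_self_eq_norm_sq_to_K, h]; norm_num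
  rw [← h2, EuclideanSpace.inner_eq_star_dotProduct, dotProduct_comm]

/-- For density operators `ρ, σ` of rank at most `r`, `ν = (ρ−σ)/2`, `μ = (ρ+σ)/2`,
`Π` the support projection of `μ` and `Π_δ` its `δ`-support projection, and `0 < α < 1`:
`tr((Π − Π_δ)|ν|^α) ≤ 2 r δ^(α/2)`. -/
theorem trace_truncated_support_abs_pow_le' {N r : ℕ} {ρ σ : Matrix (Fin N) (Fin N) ℂ}
    (hρ : ρ.PosSemidef) (hσ : σ.PosSemidef)
    (hρ1 : ρ.trace = 1) (hσ1 : σ.trace = 1)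
    (hrρ : ρ.rank ≤ r) (hrσ : σ.rank ≤ r)
    (hν : ((1/2 : ℂ) • (ρ - σ)).IsHermitian)
    (hμ : ((1/2 : ℂ) • (ρ + σ)).IsHermitian)
    {δ : ℝ} (hδ : 0 < δ) {α : ℝ} (hα0 : 0 < α) (hα1 : α < 1) :
    (((suppProj hμ 0 - suppProj hμ δ) * absPow hν α).trace).re ≤
      2 * r * δ ^ (α / 2) := by
  classical
  set μ' : Matrix (Fin N) (Fin N) ℂ := (1/2 : ℂ) • (ρ + σ) with hμ'def
  set ν' : Matrix (Fin N) (Fin N) ℂ := (1/2 : ℂ) • (ρ - σ) with hν'def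
  set lam : Fin N → ℝ := hμ.eigenvalues with hlam
  set e : Fin N → ℝ := hν.eigenvalues with he
  set U : Matrix (Fin N) (Fin N) ℂ := (hμ.eigenvectorUnitary : Matrix (Fin N) (Fin N) ℂ) with hUdef
  set V : Matrix (Fin N) (Fin N) ℂ := (hν.eigenvectorUnitary : Matrix (Fin N) (Fin N) ℂ) with hVdef
  set g : ℝ → ℝ := fun x => (if (0:ℝ) < x then 1 else 0) - (if δ < x then 1 else 0) with hg
  -- μ' is PSD
  have hμPSD : μ'.PosSemidef := psd_smul_half' (hρ.add hσ)
  -- the key PSD matrix inequality μ' - ν'*ν' ⪰ 0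
  have hKey : (μ' - ν' * ν').PosSemidef := by
    rw [hμ'def, hν'def, key_identity' ρ σ]
    refine Matrix.PosSemidef.add (Matrix.PosSemidef.add ?_ ?_) ?_
    · rw [show ((1/2 : ℂ) • (ρ + σ)) * ((1/2 : ℂ) • (ρ + σ))
          = ((1/2 : ℂ) • (ρ + σ))ᴴ * ((1/2 : ℂ) • (ρ + σ)) by rw [hμ.eq]]
      exact Matrix.posSemidef_conjTranspose_mul_self _
    · exact psd_smul_half' (sub_sq_psd' hρ hρ1)
    · exact psd_smul_half' (sub_sq_psd' hσ hσ1)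
  -- per-eigenvector bound
  have main : ∀ i : Fin N, lam i ≤ δ →
      (star ⇑(hμ.eigenvectorBasis i) ⬝ᵥ (absPow hν α *ᵥ ⇑(hμ.eigenvectorBasis i))).re
        ≤ δ ^ (α / 2) := by
    intro i hlamδ
    set u : Fin N → ℂ := ⇑(hμ.eigenvectorBasis i) with hu
    set c : Fin N → ℂ := star V *ᵥ u with hc
    set w : Fin N → ℝ := fun j => Complex.normSq (c j) with hw
    have hw0 : ∀ j, 0 ≤ w j := fun j => Complex.normSq_nonneg _
    -- sum of weights is 1
    have hw1 : ∑ j, w j = 1 := by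
      have h1 : star u ⬝ᵥ ((V * Matrix.diagonal (RCLike.ofReal ∘ (fun _ : Fin N => (1:ℝ)))
          * star V) *ᵥ u) = ∑ j, ((1:ℝ) : ℂ) * Complex.normSq (c j) :=
        quad_diag' V (fun _ => 1) u
      have h2 : V * Matrix.diagonal (RCLike.ofReal ∘ (fun _ : Fin N => (1:ℝ))) * star V
          = 1 := by
        rw [show Matrix.diagonal (RCLike.ofReal ∘ (fun _ : Fin N => (1:ℝ)))
            = (1 : Matrix (Fin N) (Fin N) ℂ) by
          ext a b
          by_cases h : a = b <;> simp [Matrix.diagonal_apply, Matrix.one_apply, h]]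
        rw [Matrix.mul_one]
        exact Unitary.coe_mul_star_self hν.eigenvectorUnitary
      rw [h2, Matrix.one_mulVec, basis_dot_one' hμ i] at h1
      have := congrArg Complex.re h1.symm
      simpa [Complex.re_sum] using this
    -- quadratic form of |ν|^α
    have hB : (star u ⬝ᵥ (absPow hν α *ᵥ u)).re = ∑ j, w j * |e j| ^ α := by
      have h1 := quad_diag' V (fun j => |e j| ^ α) u
      have heq : absPow hν α = V * Matrix.diagonal
          (RCLike.ofReal ∘ (fun j => |e j| ^ α)) * star V := rfl
      rw [heq, h1]
      rw [Complex.re_sum]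
      refine Finset.sum_congr rfl fun j _ => ?_
      have : ((|e j| ^ α : ℝ) : ℂ) * ((Complex.normSq (c j) : ℝ) : ℂ)
          = (((|e j| ^ α) * Complex.normSq (c j) : ℝ) : ℂ) := by push_cast; ring
      rw [this, Complex.ofReal_re, mul_comm]
    -- quadratic form of ν'²
    have hq2 : ∑ j, w j * (e j * e j) = (star u ⬝ᵥ ((ν' * ν') *ᵥ u)).re := by
      have hid : ν' = hν.cfc (fun x => x) := hν.spectral_theorem
      have hmul : ν' * ν' = hν.cfc (fun x => x * x) := by
        conv_lhs => rw [hid, cfc_mul' hν (fun x => x) (fun x => x)]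
      have h1 := quad_diag' V (fun j => e j * e j) u
      have heq : hν.cfc (fun x => x * x) = V * Matrix.diagonal
          (RCLike.ofReal ∘ (fun j => e j * e j)) * star V := rfl
      rw [hmul, heq, h1, Complex.re_sum]
      refine Finset.sum_congr rfl fun j _ => ?_
      have : ((e j * e j : ℝ) : ℂ) * ((Complex.normSq (c j) : ℝ) : ℂ)
          = (((e j * e j) * Complex.normSq (c j) : ℝ) : ℂ) := by push_cast; ring
      rw [this, Complex.ofReal_re, mul_comm]
    -- ⟨u, ν'² u⟩ ≤ lam i
    have hqle : (star u ⬝ᵥ ((ν' * ν') *ᵥ u)).re ≤ lam i := by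
      have h0 := hKey.dotProduct_mulVec_nonneg u
      rw [Matrix.sub_mulVec, dotProduct_sub, Complex.le_def] at h0
      have h1 : (star u ⬝ᵥ (μ' *ᵥ u)).re = lam i := by
        have := hμ.eigenvalues_eq i
        simpa using this.symm
      have := h0.1
      simp only [Complex.zero_re, Complex.sub_re] at this
      linarith [this, h1.le, h1.ge]
    have hsum2 : ∑ j, w j * (e j * e j) ≤ δ := by
      rw [hq2]; exact hqle.trans hlamδ
    -- Jensen
    rw [hB]
    have hp : (1:ℝ) ≤ 2 / α := by
      rw [le_div_iff₀ hα0]; linarith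
    have hjensen : ∑ j, w j * (|e j| ^ α) ≤ (∑ j, w j * (|e j| ^ α) ^ (2/α)) ^ (1/(2/α)) :=
      Real.arith_mean_le_rpow_mean Finset.univ w (fun j => |e j| ^ α)
        (fun j _ => hw0 j) hw1 (fun j _ => Real.rpow_nonneg (abs_nonneg _) _) hp
    have hpow : ∀ j : Fin N, (|e j| ^ α) ^ (2/α) = e j * e j := by
      intro j
      rw [← Real.rpow_mul (abs_nonneg _) α (2/α)]
      rw [show α * (2/α) = 2 by field_simp]
      rw [show ((2:ℝ)) = ((2:ℕ):ℝ) by norm_num, Real.rpow_natCast]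
      rw [sq_abs]
      ring
    have h1p : 1/(2/α) = α/2 := by
      rw [one_div_div]
    calc ∑ j, w j * |e j| ^ α
        ≤ (∑ j, w j * (|e j| ^ α) ^ (2/α)) ^ (1/(2/α)) := hjensen
      _ = (∑ j, w j * (e j * e j)) ^ (α/2) := by
          rw [h1p]
          congr 1
          exact Finset.sum_congr rfl fun j _ => by rw [hpow j]
      _ ≤ δ ^ (α/2) := by
          apply Real.rpow_le_rpow _ hsum2 (by positivity)
          exact Finset.sum_nonneg fun j _ => mul_nonneg (hw0 j) (mul_self_nonneg _)
  -- rewrite the trace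
  have hsub : suppProj hμ 0 - suppProj hμ δ = hμ.cfc g := by
    unfold suppProj
    exact cfc_sub' hμ _ _
  have htrace : ((suppProj hμ 0 - suppProj hμ δ) * absPow hν α).trace
      = ∑ i, (star U * absPow hν α * U) i i * ((g (lam i) : ℝ) : ℂ) := by
    rw [hsub]
    have hcfc : hμ.cfc g = U * Matrix.diagonal (RCLike.ofReal ∘ g ∘ lam) * star U := rfl
    rw [hcfc]
    rw [show (U * Matrix.diagonal (RCLike.ofReal ∘ g ∘ lam) * star U) * absPow hν α
        = U * (Matrix.diagonal (RCLike.ofReal ∘ g ∘ lam) * (star U * absPow hν α)) by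
      simp only [Matrix.mul_assoc]]
    rw [Matrix.trace_mul_comm]
    rw [show (Matrix.diagonal (RCLike.ofReal ∘ g ∘ lam) * (star U * absPow hν α)) * U
        = Matrix.diagonal (RCLike.ofReal ∘ g ∘ lam) * (star U * absPow hν α * U) by
      simp only [Matrix.mul_assoc]]
    rw [Matrix.trace_mul_comm, Matrix.trace]
    refine Finset.sum_congr rfl fun i _ => ?_
    rw [Matrix.diag_apply, Matrix.mul_diagonal]
    rfl
  rw [htrace]
  -- convert to a real sum
  have hterm : ∀ i : Fin N,
      ((star U * absPow hν α * U) i i * ((g (lam i) : ℝ) : ℂ)).re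
        = (star ⇑(hμ.eigenvectorBasis i) ⬝ᵥ
            (absPow hν α *ᵥ ⇑(hμ.eigenvectorBasis i))).re * g (lam i) := by
    intro i
    have hcol : (fun a => U a i) = ⇑(hμ.eigenvectorBasis i) := by
      funext a
      exact hμ.eigenvectorUnitary_apply a i
    rw [entry_quad' U (absPow hν α) i, hcol]
    rw [mul_comm, Complex.re_ofReal_mul, mul_comm]
  rw [Complex.re_sum]
  have hrw : ∑ i, ((star U * absPow hν α * U) i i * ((g (lam i) : ℝ) : ℂ)).re
      = ∑ i, (star ⇑(hμ.eigenvectorBasis i) ⬝ᵥ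
          (absPow hν α *ᵥ ⇑(hμ.eigenvectorBasis i))).re * g (lam i) :=
    Finset.sum_congr rfl fun i _ => hterm i
  rw [hrw]
  -- restrict to nonzero eigenvalues
  set S : Finset (Fin N) := Finset.univ.filter (fun i => lam i ≠ 0) with hS
  have hzero : ∀ i ∈ Finset.univ, i ∉ S →
      (star ⇑(hμ.eigenvectorBasis i) ⬝ᵥ
          (absPow hν α *ᵥ ⇑(hμ.eigenvectorBasis i))).re * g (lam i) = 0 := by
    intro i _ hiS
    have : lam i = 0 := by
      by_contra h
      exact hiS (Finset.mem_filter.mpr ⟨Finset.mem_univ i, h⟩)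
    rw [this]
    have : g 0 = 0 := by
      have hnd : ¬ δ < 0 := not_lt.mpr hδ.le
      simp [hg, lt_irrefl, hnd]
    rw [this, mul_zero]
  rw [← Finset.sum_subset (Finset.filter_subset _ _) hzero]
  -- per-term bound on S
  have hbound : ∀ i ∈ S,
      (star ⇑(hμ.eigenvectorBasis i) ⬝ᵥ
          (absPow hν α *ᵥ ⇑(hμ.eigenvectorBasis i))).re * g (lam i) ≤ δ ^ (α/2) := by
    intro i _
    by_cases hcase : lam i ≤ δ
    · have h1 := main i hcase
      have hg01 : g (lam i) = 0 ∨ g (lam i) = 1 := by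
        rw [hg]
        by_cases h0 : (0:ℝ) < lam i <;> by_cases h2 : δ < lam i <;> simp [h0, h2] <;> linarith
      rcases hg01 with h | h
      · rw [h, mul_zero]
        positivity
      · rw [h, mul_one]
        exact h1
    · have : g (lam i) = 0 := by
        push_neg at hcase
        rw [hg]
        have h0 : (0:ℝ) < lam i := hδ.trans hcase
        simp [h0, hcase]
      rw [this, mul_zero]
      positivity
  calc ∑ i ∈ S, (star ⇑(hμ.eigenvectorBasis i) ⬝ᵥ
          (absPow hν α *ᵥ ⇑(hμ.eigenvectorBasis i))).re * g (lam i)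
      ≤ S.card • δ ^ (α/2) := Finset.sum_le_card_nsmul S _ _ hbound
    _ = (S.card : ℝ) * δ ^ (α/2) := by rw [nsmul_eq_mul]
    _ ≤ 2 * r * δ ^ (α/2) := by
        apply mul_le_mul_of_nonneg_right _ (by positivity)
        have hcard : S.card = μ'.rank := by
          rw [hμ.rank_eq_card_non_zero_eigs]
          rw [Fintype.card_subtype]
        have hrank : μ'.rank ≤ 2 * r := by
          calc μ'.rank ≤ (ρ + σ).rank := rank_smul_le' _ _
            _ ≤ ρ.rank + σ.rank := rank_add_le' ρ σ
            _ ≤ r + r := Nat.add_le_add hrρ hrσ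
            _ = 2 * r := by ring
        calc (S.card : ℝ) = (μ'.rank : ℝ) := by rw [hcard]
          _ ≤ ((2 * r : ℕ) : ℝ) := Nat.cast_le.mpr hrank
          _ = 2 * r := by push_cast; ring
end

section
/- Let A be a positive semidefinite operator on a finite-dimensional Hilbert space with operator norm at most 1, with spectral decomposition A = Σ_j λ_j |ψ_j⟩⟨ψ_j|. Fix δ, ε ∈ (0, 1/10] with 32ε² ≤ δ, and let Q: [0,1] → ℝ satisfy: Q(x)² x ≤ δε² for x ∈ (0, δ]; (√δ/(2√x) − ε)²(1−ε)² ≤ Q(x)² ≤ (√δ/(2√x) + ε)² for x ∈ (2δ, 1]; and 0 ≤ Q(x)²x ≤ δ/4 + ε² + √δ·ε for x ∈ (δ, 2δ]. Then (δ/4·(1−2ε) − √δ·ε)·Π_{2δ} ≤ A Q(A)² ≤ (δ/4 + ε² + √δ·ε)·Π₀, where Π_δ' denotes the projection onto eigenvectors of A with eigenvalue > δ' and Π₀ the projection onto the support of A. -/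
set_option maxHeartbeats 1000000

open Matrix
open scoped ComplexOrder

lemma diag_helper {N : ℕ} (a b : Fin N → ℝ) (c : ℝ) :
    Matrix.diagonal (fun i => ((a i : ℂ))) - (c : ℂ) • Matrix.diagonal (fun i => ((b i : ℂ)))
      = Matrix.diagonal (fun i => ((a i - c * b i : ℝ) : ℂ)) := by
  ext i j
  by_cases h : i = j <;> simp [Matrix.diagonal, h] <;> push_cast <;> ring

lemma cfc_sub_smul' {N : ℕ} {A : Matrix (Fin N) (Fin N) ℂ} (hA : A.IsHermitian)
    (f g : ℝ → ℝ) (c : ℝ) :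
    hA.cfc f - (c : ℂ) • hA.cfc g = hA.cfc (fun x => f x - c * g x) := by
  unfold Matrix.IsHermitian.cfc
  simp only [Unitary.conjStarAlgAut_apply]
  rw [← Matrix.smul_mul, ← Matrix.mul_smul, ← Matrix.sub_mul, ← Matrix.mul_sub]
  congr 2
  exact diag_helper (fun i => f (hA.eigenvalues i)) (fun i => g (hA.eigenvalues i)) c

lemma diag_helper2 {N : ℕ} (a b : Fin N → ℝ) (c : ℝ) :
    (c : ℂ) • Matrix.diagonal (fun i => ((b i : ℂ))) - Matrix.diagonal (fun i => ((a i : ℂ)))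
      = Matrix.diagonal (fun i => ((c * b i - a i : ℝ) : ℂ)) := by
  ext i j
  by_cases h : i = j <;> simp [Matrix.diagonal, h]

lemma smul_sub_cfc' {N : ℕ} {A : Matrix (Fin N) (Fin N) ℂ} (hA : A.IsHermitian)
    (f g : ℝ → ℝ) (c : ℝ) :
    (c : ℂ) • hA.cfc g - hA.cfc f = hA.cfc (fun x => c * g x - f x) := by
  unfold Matrix.IsHermitian.cfc
  simp only [Unitary.conjStarAlgAut_apply]
  rw [← Matrix.smul_mul, ← Matrix.mul_smul, ← Matrix.sub_mul, ← Matrix.mul_sub]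
  congr 2
  exact diag_helper2 (fun i => f (hA.eigenvalues i)) (fun i => g (hA.eigenvalues i)) c

lemma cfc_posSemidef' {N : ℕ} {A : Matrix (Fin N) (Fin N) ℂ} (hA : A.IsHermitian)
    {f : ℝ → ℝ} (hf : ∀ i, 0 ≤ f (hA.eigenvalues i)) : (hA.cfc f).PosSemidef := by
  unfold Matrix.IsHermitian.cfc
  simp only [Unitary.conjStarAlgAut_apply]
  rw [Matrix.star_eq_conjTranspose]
  refine (Matrix.posSemidef_diagonal_iff.mpr fun i => ?_).mul_mul_conjTranspose_same _
  simpa [Complex.zero_le_real] using hf i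


lemma eig_le_one {N : ℕ} {A : Matrix (Fin N) (Fin N) ℂ} (hA : A.IsHermitian)
    (h1 : opNorm A ≤ 1) (i : Fin N) : hA.eigenvalues i ≤ 1 := by
  set v := hA.eigenvectorBasis i with hv
  have hnv : ‖v‖ = 1 := hA.eigenvectorBasis.orthonormal.1 i
  have h2 : toEuclideanCLM (𝕜 := ℂ) A v = hA.eigenvalues i • v := by
    apply (WithLp.equiv 2 _).injective
    rw [WithLp.equiv_apply, WithLp.equiv_apply, Matrix.ofLp_toEuclideanCLM]
    simpa using hA.mulVec_eigenvectorBasis i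
  have h3 : ‖toEuclideanCLM (𝕜 := ℂ) A v‖ ≤ opNorm A * ‖v‖ :=
    (toEuclideanCLM (𝕜 := ℂ) A).le_opNorm v
  rw [h2, norm_smul, hnv] at h3
  have := le_trans (le_abs_self _) (by simpa using h3)
  linarith


lemma sqrt_four_eps {δ ε : ℝ} (hδ0 : 0 < δ) (hε0 : 0 < ε) (hδε : 32 * ε ^ 2 ≤ δ) :
    4 * ε ≤ Real.sqrt δ := by
  have h : 4 * ε = Real.sqrt (16 * ε ^ 2) := by
    rw [show (16:ℝ) * ε ^ 2 = (4*ε)^2 by ring, Real.sqrt_sq (by positivity)]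
  rw [h]
  exact Real.sqrt_le_sqrt (by nlinarith)

lemma pointwise_lower {δ ε t : ℝ} (hδ0 : 0 < δ) (hδ1 : δ ≤ 1/10) (hε0 : 0 < ε)
    (hε1 : ε ≤ 1/10) (hδε : 32 * ε ^ 2 ≤ δ) {Q : ℝ → ℝ}
    (hQ2 : ∀ x ∈ Set.Ioc (2*δ) 1,
      (Real.sqrt δ / (2 * Real.sqrt x) - ε) ^ 2 * (1 - ε) ^ 2 ≤ (Q x) ^ 2)
    (ht0 : 0 ≤ t) (ht1 : t ≤ 1) :
    0 ≤ t * (Q t) ^ 2 - (δ/4 * (1 - 2*ε) - Real.sqrt δ * ε) * (if 2*δ < t then 1 else 0) := by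
  set sδ := Real.sqrt δ with hsd
  have hsδ2 : sδ ^ 2 = δ := Real.sq_sqrt hδ0.le
  have hsδ0 : 0 < sδ := Real.sqrt_pos.mpr hδ0
  have hε4 : 4 * ε ≤ sδ := sqrt_four_eps hδ0 hε0 hδε
  by_cases h2δ : 2*δ < t
  · rw [if_pos h2δ]
    have ht0' : 0 < t := lt_trans (by positivity) h2δ
    set s := Real.sqrt t with hs
    have hs2 : s ^ 2 = t := Real.sq_sqrt ht0
    have hs0 : 0 < s := Real.sqrt_pos.mpr ht0'
    have hs1 : s ≤ 1 := Real.sqrt_le_one.mpr ht1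
    have hq := hQ2 t ⟨h2δ, ht1⟩
    set a := sδ / (2 * s) with ha'
    have hsa : s * a = sδ / 2 := by
      rw [ha']; field_simp
    have h1 : (sδ/2 - ε*s)^2 * (1-ε)^2 ≤ t * (Q t) ^ 2 := by
      have hmul := mul_le_mul_of_nonneg_left hq (by positivity : (0:ℝ) ≤ s^2)
      calc (sδ/2 - ε*s)^2 * (1-ε)^2 = s^2 * ((a-ε)^2*(1-ε)^2) := by
            rw [← hsa]; ring
        _ ≤ s^2 * (Q t)^2 := hmul
        _ = t * (Q t)^2 := by rw [hs2]
    have e1 : (0:ℝ) ≤ sδ/2 - ε := by linarith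
    have hes : ε * s ≤ ε := mul_le_of_le_one_right hε0.le hs1
    have e2 : sδ/2 - ε ≤ sδ/2 - ε*s := by linarith
    have h2 : (sδ/2 - ε)^2 ≤ (sδ/2 - ε*s)^2 := pow_le_pow_left₀ e1 e2 2
    have h2' : (sδ/2 - ε)^2 * (1-ε)^2 ≤ (sδ/2 - ε*s)^2 * (1-ε)^2 :=
      mul_le_mul_of_nonneg_right h2 (sq_nonneg _)
    have h3 : δ/4 * (1 - 2*ε) - sδ * ε ≤ (sδ/2 - ε)^2 * (1-ε)^2 := by
      nlinarith [mul_nonneg (mul_nonneg hsδ0.le (sq_nonneg ε)) (by linarith : (0:ℝ) ≤ 2 - ε),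
        mul_nonneg (sq_nonneg ε) (sq_nonneg (1-ε)), mul_nonneg hδ0.le (sq_nonneg ε)]
    linarith
  · rw [if_neg h2δ]
    have : 0 ≤ t * (Q t)^2 := by positivity
    linarith

lemma pointwise_upper {δ ε t : ℝ} (hδ0 : 0 < δ) (hδ1 : δ ≤ 1/10) (hε0 : 0 < ε)
    (hε1 : ε ≤ 1/10) (hδε : 32 * ε ^ 2 ≤ δ) {Q : ℝ → ℝ}
    (hQ1 : ∀ x ∈ Set.Ioc 0 δ, (Q x) ^ 2 * x ≤ δ * ε ^ 2)
    (hQ2 : ∀ x ∈ Set.Ioc (2*δ) 1, (Q x) ^ 2 ≤ (Real.sqrt δ / (2 * Real.sqrt x) + ε) ^ 2)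
    (hQ3 : ∀ x ∈ Set.Ioc δ (2*δ), (Q x) ^ 2 * x ≤ δ/4 + ε ^ 2 + Real.sqrt δ * ε)
    (ht0 : 0 ≤ t) (ht1 : t ≤ 1) :
    0 ≤ (δ/4 + ε ^ 2 + Real.sqrt δ * ε) * (if 0 < t then 1 else 0) - t * (Q t) ^ 2 := by
  set sδ := Real.sqrt δ with hsd
  have hsδ2 : sδ ^ 2 = δ := Real.sq_sqrt hδ0.le
  have hsδ0 : 0 < sδ := Real.sqrt_pos.mpr hδ0
  by_cases h0 : 0 < t
  · rw [if_pos h0]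
    rcases le_or_gt t δ with hc | hc
    · have := hQ1 t ⟨h0, hc⟩
      nlinarith [sq_nonneg ε, mul_nonneg hsδ0.le hε0.le]
    · rcases le_or_gt t (2*δ) with hc2 | hc2
      · have := hQ3 t ⟨hc, hc2⟩
        linarith
      · set s := Real.sqrt t with hs
        have hs2 : s ^ 2 = t := Real.sq_sqrt ht0
        have hs0 : 0 < s := Real.sqrt_pos.mpr h0
        have hs1 : s ≤ 1 := Real.sqrt_le_one.mpr ht1
        have hq := hQ2 t ⟨hc2, ht1⟩
        set a := sδ / (2 * s) with ha'
        have hsa : s * a = sδ / 2 := by rw [ha']; field_simp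
        have h1 : t * (Q t)^2 ≤ (sδ/2 + ε*s)^2 := by
          have hmul := mul_le_mul_of_nonneg_left hq (by positivity : (0:ℝ) ≤ s^2)
          calc t * (Q t)^2 = s^2 * (Q t)^2 := by rw [hs2]
            _ ≤ s^2 * (a + ε)^2 := hmul
            _ = (sδ/2 + ε*s)^2 := by rw [← hsa]; ring
        have hes : ε * s ≤ ε := mul_le_of_le_one_right hε0.le hs1
        have h2 : (sδ/2 + ε*s)^2 ≤ (sδ/2 + ε)^2 :=
          pow_le_pow_left₀ (by positivity) (by linarith) 2
        nlinarith [h1, h2, hsδ2]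
  · have ht : t = 0 := le_antisymm (not_lt.mp h0) ht0
    rw [if_neg h0, ht]
    simp

/-- Eigenvalue threshold projector bounds: under the stated pointwise bounds on `Q`,
`(δ/4 (1−2ε) − √δ ε) Π_{2δ} ≤ A Q(A)² ≤ (δ/4 + ε² + √δ ε) Π₀` in the Loewner order,
where `Π_{δ'}` projects onto eigenvectors of `A` with eigenvalue `> δ'`. -/
theorem eigenvalue_threshold_projector_bounds {N : ℕ} {A : Matrix (Fin N) (Fin N) ℂ}
    (hA : A.PosSemidef) (hA1 : opNorm A ≤ 1)
    {δ ε : ℝ} (hδ : δ ∈ Set.Ioc 0 (1/10 : ℝ)) (hε : ε ∈ Set.Ioc 0 (1/10 : ℝ))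
    (hδε : 32 * ε ^ 2 ≤ δ)
    (Q : ℝ → ℝ)
    (hQ1 : ∀ x ∈ Set.Ioc 0 δ, (Q x) ^ 2 * x ≤ δ * ε ^ 2)
    (hQ2 : ∀ x ∈ Set.Ioc (2*δ) 1,
      (Real.sqrt δ / (2 * Real.sqrt x) - ε) ^ 2 * (1 - ε) ^ 2 ≤ (Q x) ^ 2 ∧
        (Q x) ^ 2 ≤ (Real.sqrt δ / (2 * Real.sqrt x) + ε) ^ 2)
    (hQ3 : ∀ x ∈ Set.Ioc δ (2*δ),
      0 ≤ (Q x) ^ 2 * x ∧ (Q x) ^ 2 * x ≤ δ/4 + ε ^ 2 + Real.sqrt δ * ε) :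
    (hA.1.cfc (fun x => x * (Q x) ^ 2) -
        ((δ/4 * (1 - 2*ε) - Real.sqrt δ * ε : ℝ) : ℂ) •
          hA.1.cfc (fun x => if 2*δ < x then 1 else 0)).PosSemidef ∧
      (((δ/4 + ε ^ 2 + Real.sqrt δ * ε : ℝ) : ℂ) •
          hA.1.cfc (fun x => if 0 < x then 1 else 0) -
        hA.1.cfc (fun x => x * (Q x) ^ 2)).PosSemidef := by
  have heig0 : ∀ i, 0 ≤ hA.1.eigenvalues i := hA.eigenvalues_nonneg
  have heig1 : ∀ i, hA.1.eigenvalues i ≤ 1 := eig_le_one hA.1 hA1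
  constructor
  · rw [cfc_sub_smul' hA.1]
    refine cfc_posSemidef' hA.1 fun i => ?_
    exact pointwise_lower hδ.1 hδ.2 hε.1 hε.2 hδε (fun x hx => (hQ2 x hx).1)
      (heig0 i) (heig1 i)
  · rw [smul_sub_cfc' hA.1]
    refine cfc_posSemidef' hA.1 fun i => ?_
    exact pointwise_upper hδ.1 hδ.2 hε.1 hε.2 hδε hQ1 (fun x hx => (hQ2 x hx).2)
      (fun x hx => (hQ3 x hx).2) (heig0 i) (heig1 i)
end
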